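/- arXiv:2304.05061 — 4 statements merged into one kernel-verified Lean document; each statement's English description precedes it below -/
import Mathlib

section
/- The formal power series exp(x) = Σ_{k≥0} x^k/k! in ℚ[[x]] is transcendental over the field of rational functions ℚ(x). -/
open PowerSeries Polynomial

noncomputable section

/-- `E b = exp(b x)` -/
def E (b : ℚ) : ℚ⟦X⟧ := PowerSeries.rescale b (PowerSeries.exp ℚ)

lemma constantCoeff_E (b : ℚ) : PowerSeries.constantCoeff (E b) = 1 := by
  rw [E, ← PowerSeries.coeff_zero_eq_constantCoeff_apply, PowerSeries.coeff_rescale]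
  simp [PowerSeries.coeff_exp]

lemma derivative_E (b : ℚ) : d⁄dX ℚ (E b) = PowerSeries.C b * E b := by
  rw [E]
  ext n
  rw [PowerSeries.coeff_derivative, PowerSeries.coeff_C_mul,
    PowerSeries.coeff_rescale, PowerSeries.coeff_rescale, PowerSeries.coeff_exp,
    PowerSeries.coeff_exp]
  have h1 : (Nat.factorial (n+1) : ℚ) ≠ 0 := by exact_mod_cast (Nat.factorial_pos _).ne'
  have h2 : (Nat.factorial n : ℚ) ≠ 0 := by exact_mod_cast (Nat.factorial_pos _).ne'
  simp only [eq_ratCast, Rat.cast_div, Rat.cast_one, Rat.cast_natCast]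
  field_simp
  rw [Nat.factorial_succ]
  push_cast
  ring

/-- the operator `D - a` -/
def Lop (a : ℚ) : ℚ⟦X⟧ →ₗ[ℚ] ℚ⟦X⟧ :=
  (PowerSeries.derivative ℚ).toLinearMap - LinearMap.mulLeft ℚ (PowerSeries.C a)

/-- the corresponding operator on polynomial coefficients -/
def phi (c : ℚ) (q : ℚ[X]) : ℚ[X] := derivative q + c • q

lemma Lop_poly_mul_E (a b : ℚ) (q : ℚ[X]) :
    Lop a ((q : ℚ⟦X⟧) * E b) = ((phi (b - a) q : ℚ[X]) : ℚ⟦X⟧) * E b := by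
  have leib : d⁄dX ℚ ((q : ℚ⟦X⟧) * E b)
      = (q : ℚ⟦X⟧) * d⁄dX ℚ (E b) + (E b) * d⁄dX ℚ (q : ℚ⟦X⟧) := by
    simp [smul_eq_mul, (PowerSeries.derivative ℚ).leibniz (q : ℚ⟦X⟧) (E b)]
  simp only [Lop, LinearMap.sub_apply, Derivation.coeFn_coe, LinearMap.mulLeft_apply,
    leib, derivative_E, PowerSeries.derivative_coe, phi]
  rw [Polynomial.smul_eq_C_mul, Polynomial.coe_add, Polynomial.coe_mul, Polynomial.coe_C,
    map_sub]
  ring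

lemma Lop_iter_poly_mul_E (a b : ℚ) (q : ℚ[X]) (k : ℕ) :
    (Lop a ^ k) ((q : ℚ⟦X⟧) * E b) = (((phi (b - a))^[k] q : ℚ[X]) : ℚ⟦X⟧) * E b := by
  induction k generalizing q with
  | zero => rw [pow_zero, Module.End.one_apply, Function.iterate_zero_apply]
  | succ k ih =>
      rw [pow_succ, Module.End.mul_apply, Lop_poly_mul_E, ih, Function.iterate_succ_apply]

lemma phi_zero_eq : phi 0 = fun q => Polynomial.derivative q := by
  funext q; simp [phi]

lemma phi_ne (c : ℚ) (hc : c ≠ 0) (q : ℚ[X]) (hq : q ≠ 0) :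
    phi c q ≠ 0 ∧ (phi c q).natDegree = q.natDegree := by
  have hco : (phi c q).coeff q.natDegree = c * q.leadingCoeff := by
    rw [phi, Polynomial.coeff_add, Polynomial.coeff_smul, Polynomial.coeff_derivative,
      Polynomial.coeff_natDegree_succ_eq_zero, Polynomial.leadingCoeff, smul_eq_mul]
    ring
  have hne : (phi c q).coeff q.natDegree ≠ 0 := by
    rw [hco]
    exact mul_ne_zero hc (Polynomial.leadingCoeff_ne_zero.mpr hq)
  have h1 : (phi c q) ≠ 0 := fun h => hne (by simp [h])
  have hle : (phi c q).natDegree ≤ q.natDegree := by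
    refine (Polynomial.natDegree_add_le _ _).trans ?_
    simp only [sup_le_iff]
    exact ⟨(Polynomial.natDegree_derivative_le q).trans (Nat.sub_le _ _), Polynomial.natDegree_smul_le c q⟩
  exact ⟨h1, le_antisymm hle (Polynomial.le_natDegree_of_ne_zero hne)⟩

lemma phi_iter_ne (c : ℚ) (hc : c ≠ 0) (q : ℚ[X]) (hq : q ≠ 0) (k : ℕ) :
    (phi c)^[k] q ≠ 0 := by
  induction k with
  | zero => simpa
  | succ k ih =>
      rw [Function.iterate_succ', Function.comp_apply]
      exact (phi_ne c hc _ ih).1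

lemma key : ∀ (s : Finset ℕ) (p : ℕ → ℚ[X]) (i0 : ℕ), i0 ∉ s →
    ((p i0 : ℚ⟦X⟧) * E i0 + ∑ i ∈ s, (p i : ℚ⟦X⟧) * E i = 0) → p i0 = 0 := by
  intro s
  induction s using Finset.induction with
  | empty =>
      intro p i0 _ h
      simp only [Finset.sum_empty, add_zero] at h
      have hu : IsUnit (E (i0:ℚ)) := by
        rw [PowerSeries.isUnit_iff_constantCoeff, constantCoeff_E]
        exact isUnit_one
      have hE : (E (i0:ℚ)) ≠ 0 := fun h0 => by
        have := constantCoeff_E (i0 : ℚ)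
        rw [h0] at this
        simp at this
      rcases mul_eq_zero.mp h with h' | h'
      · exact (Polynomial.coe_eq_zero_iff).mp h'
      · exact absurd h' hE
  | @insert j t hj ih =>
      intro p i0 hi0 h
      have hi0j : i0 ≠ j := fun h' => hi0 (h' ▸ Finset.mem_insert_self j t)
      have hi0t : i0 ∉ t := fun h' => hi0 (Finset.mem_insert_of_mem h')
      set k := (p j).natDegree + 1 with hk
      set q : ℕ → ℚ[X] := fun i => (phi ((i : ℚ) - (j : ℚ)))^[k] (p i) with hq
      have hM := congrArg (Lop (j : ℚ) ^ k) h
      rw [map_add, map_sum, map_zero, Finset.sum_insert hj] at hM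
      rw [Lop_iter_poly_mul_E] at hM
      have hjterm : (Lop (j:ℚ) ^ k) ((p j : ℚ⟦X⟧) * E j) = 0 := by
        rw [Lop_iter_poly_mul_E, sub_self, phi_zero_eq,
          Polynomial.iterate_derivative_eq_zero (by omega)]
        simp
      rw [hjterm, zero_add] at hM
      have hM' : (q i0 : ℚ⟦X⟧) * E i0 + ∑ i ∈ t, (q i : ℚ⟦X⟧) * E i = 0 := by
        rw [hq]
        convert hM using 2
        apply Finset.sum_congr rfl
        intro i _
        rw [Lop_iter_poly_mul_E]
      have hq0 : q i0 = 0 := ih q i0 hi0t hM'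
      by_contra hp
      have hcne : ((i0 : ℚ) - (j : ℚ)) ≠ 0 := by
        rw [sub_ne_zero]
        exact_mod_cast hi0j
      exact phi_iter_ne _ hcne _ hp k hq0

/-- The formal power series `exp(x) = ∑ x^k/k!` in `ℚ⟦x⟧` is transcendental over `ℚ(x)`
(equivalently, over `ℚ[x]`): it satisfies no nonzero polynomial equation `P(x, y(x)) = 0`
with `P ∈ ℚ[x][Y]`. -/
theorem exp_transcendental : Transcendental (Polynomial ℚ) (PowerSeries.exp ℚ) := by
  rintro ⟨P, hP, hev⟩
  apply hP
  have halg : ∀ p : ℚ[X], algebraMap ℚ[X] ℚ⟦X⟧ p = (p : ℚ⟦X⟧) := by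
    intro p
    rw [PowerSeries.algebraMap_apply']
    ext n
    simp [Polynomial.coeff_coe]
  have hsum : Polynomial.aeval (PowerSeries.exp ℚ) P
      = ∑ i ∈ P.support, ((P.coeff i : ℚ[X]) : ℚ⟦X⟧) * E i := by
    rw [Polynomial.aeval_def, Polynomial.eval₂_eq_sum, Polynomial.sum_def]
    apply Finset.sum_congr rfl
    intro i _
    rw [halg, PowerSeries.exp_pow_eq_rescale_exp, ← E]
  rw [hsum] at hev
  refine Polynomial.ext fun i => ?_
  rw [Polynomial.coeff_zero]
  by_cases hi : i ∈ P.support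
  · refine key (P.support.erase i) (fun j => P.coeff j) i (Finset.notMem_erase i _) ?_
    rw [Finset.add_sum_erase _ (fun j => ((P.coeff j : ℚ[X]) : ℚ⟦X⟧) * E (j : ℚ)) hi]
    exact hev
  · exact Polynomial.notMem_support_iff.mp hi

end
end

section
/- If y ∈ ℚ[[x]] satisfies P(x, y(x)) = 0 for some polynomial P ∈ ℚ[x,Y] of degree n ≥ 1 in Y that is irreducible (or of minimal degree among annihilators of y), then the derivatives y, y', y'', …, y^{(n)} are linearly dependent over ℚ(x); in particular y satisfies a nonzero linear differential equation with coefficients in ℚ(x) of order at most n. -/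
open Polynomial PowerSeries
open scoped RatFunc

noncomputable section AbelAux

lemma algebraMap_polynomial_powerSeries_eq_coe (a : Polynomial ℚ) :
    algebraMap (Polynomial ℚ) (PowerSeries ℚ) a = (a : PowerSeries ℚ) := by
  rw [PowerSeries.algebraMap_apply']
  simp [Algebra.algebraMap_self, PowerSeries.map_id]

lemma derivativeFun_algebraMap (a : Polynomial ℚ) :
    PowerSeries.derivativeFun (algebraMap (Polynomial ℚ) (PowerSeries ℚ) a)
      = algebraMap (Polynomial ℚ) (PowerSeries ℚ) (Polynomial.derivative a) := by
  rw [algebraMap_polynomial_powerSeries_eq_coe, algebraMap_polynomial_powerSeries_eq_coe]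
  exact PowerSeries.derivative_coe a

/-- coefficient-wise derivative of a bivariate polynomial -/
def cderiv (Q : Polynomial (Polynomial ℚ)) : Polynomial (Polynomial ℚ) :=
  Q.sum fun i a => Polynomial.C (Polynomial.derivative a) * Polynomial.X ^ i

lemma cderiv_monomial (i : ℕ) (a : Polynomial ℚ) :
    cderiv (Polynomial.monomial i a)
      = Polynomial.C (Polynomial.derivative a) * Polynomial.X ^ i := by
  unfold cderiv
  rw [Polynomial.sum_monomial_index]
  simp

lemma cderiv_add (p q : Polynomial (Polynomial ℚ)) :
    cderiv (p + q) = cderiv p + cderiv q := by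
  unfold cderiv
  rw [Polynomial.sum_add_index] <;> simp [add_mul]

lemma derivativeFun_aeval (y : PowerSeries ℚ) (Q : Polynomial (Polynomial ℚ)) :
    PowerSeries.derivativeFun (Polynomial.aeval y Q)
      = Polynomial.aeval y (cderiv Q)
        + Polynomial.aeval y (Polynomial.derivative Q) * PowerSeries.derivativeFun y := by
  have hder : ∀ f : PowerSeries ℚ, PowerSeries.derivativeFun f = (d⁄dX ℚ) f := fun _ => rfl
  induction Q using Polynomial.induction_on' with
  | add p q hp hq =>
      rw [map_add, PowerSeries.derivativeFun_add, hp, hq, cderiv_add, map_add,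
        Polynomial.derivative_add, map_add]
      ring
  | monomial i a =>
      rw [Polynomial.aeval_monomial, cderiv_monomial, Polynomial.derivative_monomial]
      rw [hder, Derivation.leibniz, Derivation.leibniz_pow, ← hder, ← hder,
        derivativeFun_algebraMap]
      simp only [map_mul, Polynomial.aeval_C, Polynomial.aeval_X, map_pow, map_natCast,
        smul_eq_mul, nsmul_eq_mul, Polynomial.aeval_monomial, hder]
      ring

instance : IsScalarTower (Polynomial ℚ) (PowerSeries ℚ) (LaurentSeries ℚ) :=
  IsScalarTower.of_algebraMap_eq' rfl

lemma bridge (g : PowerSeries ℚ) (Q : Polynomial (Polynomial ℚ)) :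
    algebraMap (PowerSeries ℚ) (LaurentSeries ℚ) (Polynomial.aeval g Q)
      = Polynomial.aeval (algebraMap (PowerSeries ℚ) (LaurentSeries ℚ) g)
          (Q.map (algebraMap (Polynomial ℚ) (RatFunc ℚ))) := by
  rw [Polynomial.aeval_map_algebraMap]
  exact (Polynomial.aeval_algHom_apply
    (IsScalarTower.toAlgHom (Polynomial ℚ) (PowerSeries ℚ) (LaurentSeries ℚ)) g Q).symm

end AbelAux


set_option maxHeartbeats 1000000
set_option synthInstance.maxHeartbeats 200000

/-- **Abel's theorem**: if `y ∈ ℚ⟦x⟧` is a root of a polynomial `P ∈ ℚ[x][Y]` of degree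
`n ≥ 1` in `Y` which has minimal degree among the annihilators of `y`, then the formal
derivatives `y, y', …, y⁽ⁿ⁾` are linearly dependent over `ℚ(x)` (equivalently, after
clearing denominators, over `ℚ[x]`); in particular `y` satisfies a nonzero linear
differential equation with rational-function coefficients of order at most `n`. -/
theorem algebraic_powerSeries_isDFinite
    (y : PowerSeries ℚ) (n : ℕ) (hn : 1 ≤ n)
    (P : Polynomial (Polynomial ℚ)) (hP : P ≠ 0) (hdeg : P.natDegree = n)
    (hroot : Polynomial.aeval y P = 0)
    (hmin : ∀ Q : Polynomial (Polynomial ℚ), Q ≠ 0 → Polynomial.aeval y Q = 0 →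
      n ≤ Q.natDegree) :
    ∃ a : Fin (n + 1) → Polynomial ℚ, (∃ i, a i ≠ 0) ∧
      ∑ i : Fin (n + 1), (a i : PowerSeries ℚ) *
        (PowerSeries.derivativeFun)^[(i : ℕ)] y = 0 := by
  classical
  set ι := algebraMap (PowerSeries ℚ) (LaurentSeries ℚ) with hιdef
  have hι : Function.Injective ι := HahnSeries.ofPowerSeries_injective
  have hι0 : ∀ f : PowerSeries ℚ, f ≠ 0 → ι f ≠ 0 := by
    intro f hf h
    exact hf (hι (by rw [h, map_zero]))
  set yb := ι y with hybdef
  set φ := algebraMap (Polynomial ℚ) (RatFunc ℚ) with hφdef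
  have hφinj : Function.Injective φ := IsFractionRing.injective _ _
  have hPb0 : P.map φ ≠ 0 := by
    intro h
    exact hP (Polynomial.map_injective φ hφinj (by rw [h, Polynomial.map_zero]))
  have hPbroot : Polynomial.aeval yb (P.map φ) = 0 := by
    rw [← bridge, hroot, map_zero]
  have hint : IsIntegral (RatFunc ℚ) yb := (IsAlgebraic.isIntegral ⟨P.map φ, hPb0, hPbroot⟩)
  set μ := minpoly (RatFunc ℚ) yb with hμdef
  have hμmonic : μ.Monic := minpoly.monic hint
  have hμroot : Polynomial.aeval yb μ = 0 := minpoly.aeval _ _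
  have hμn : μ.natDegree ≤ n := by
    have h1 : μ.degree ≤ (P.map φ).degree :=
      minpoly.degree_le_of_ne_zero (RatFunc ℚ) yb hPb0 hPbroot
    have h2 := Polynomial.natDegree_le_natDegree h1
    rwa [Polynomial.natDegree_map_eq_of_injective hφinj, hdeg] at h2
  have hμpos : 0 < μ.natDegree := minpoly.natDegree_pos hint
  have hμne1 : μ ≠ 1 := by
    intro h
    rw [h, Polynomial.natDegree_one] at hμpos
    omega
  -- reduction mod μ
  have hred : ∀ q : Polynomial (RatFunc ℚ),
      Polynomial.aeval yb q = ∑ j : Fin n,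
        algebraMap (RatFunc ℚ) (LaurentSeries ℚ) ((q %ₘ μ).coeff j) * yb ^ (j : ℕ) := by
    intro q
    have h1 : (q %ₘ μ).natDegree < n :=
      lt_of_lt_of_le (Polynomial.natDegree_modByMonic_lt q hμmonic hμne1) hμn
    conv_lhs => rw [← Polynomial.modByMonic_add_div q μ]
    rw [map_add, map_mul, hμroot, zero_mul, add_zero,
      Polynomial.aeval_eq_sum_range' h1,
      ← Fin.sum_univ_eq_sum_range (fun i => (q %ₘ μ).coeff i • yb ^ i) n]
    exact Finset.sum_congr rfl (fun j _ => Algebra.smul_def _ _)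
  have hcast : ∀ s : Polynomial ℚ,
      ι (algebraMap (Polynomial ℚ) (PowerSeries ℚ) s)
        = algebraMap (RatFunc ℚ) (LaurentSeries ℚ) (φ s) := by
    intro s
    rw [← IsScalarTower.algebraMap_apply,
      IsScalarTower.algebraMap_apply (Polynomial ℚ) (RatFunc ℚ) (LaurentSeries ℚ)]
  have hKLinj : Function.Injective (algebraMap (RatFunc ℚ) (LaurentSeries ℚ)) :=
    (algebraMap (RatFunc ℚ) (LaurentSeries ℚ)).injective
  -- the first derivative is a polynomial in `yb`
  obtain ⟨w, hw⟩ : ∃ w : Polynomial (RatFunc ℚ),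
      ι (PowerSeries.derivativeFun y) = Polynomial.aeval yb w := by
    have hPd0 : Polynomial.derivative P ≠ 0 := by
      intro h
      have := Polynomial.natDegree_eq_zero_of_derivative_eq_zero h
      omega
    have hPdne : Polynomial.aeval y (Polynomial.derivative P) ≠ 0 := by
      intro h0
      have h1 := hmin _ hPd0 h0
      have h2 := Polynomial.natDegree_derivative_lt (p := P) (by omega)
      omega
    have hPdyne : Polynomial.aeval yb ((Polynomial.derivative P).map φ) ≠ 0 := by
      rw [← bridge]
      exact hι0 _ hPdne
    have hnotdvd : ¬ μ ∣ (Polynomial.derivative P).map φ := by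
      rintro ⟨c, hc⟩
      apply hPdyne
      rw [hc, map_mul, hμroot, zero_mul]
    obtain ⟨u, v, huv⟩ := ((minpoly.irreducible hint).coprime_iff_not_dvd.mpr hnotdvd)
    have hbez : Polynomial.aeval yb (v * (Polynomial.derivative P).map φ) = 1 := by
      have := congrArg (Polynomial.aeval yb) huv
      rw [map_add, map_one, map_mul, map_mul, hμroot, mul_zero, zero_add] at this
      rw [map_mul]
      exact this
    have key : Polynomial.aeval y (Polynomial.derivative P) * PowerSeries.derivativeFun y
        = - Polynomial.aeval y (cderiv P) := by
      have h := derivativeFun_aeval y P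
      rw [hroot] at h
      have h0 : PowerSeries.derivativeFun (0 : PowerSeries ℚ) = 0 := map_zero (d⁄dX ℚ)
      rw [h0] at h
      linear_combination -h
    have keyL : Polynomial.aeval yb ((Polynomial.derivative P).map φ)
          * ι (PowerSeries.derivativeFun y)
        = - Polynomial.aeval yb ((cderiv P).map φ) := by
      rw [← bridge, ← bridge, ← map_mul, key, map_neg]
    refine ⟨v * (-((cderiv P).map φ)), ?_⟩
    calc ι (PowerSeries.derivativeFun y)
        = (Polynomial.aeval yb (v * (Polynomial.derivative P).map φ))
            * ι (PowerSeries.derivativeFun y) := by rw [hbez, one_mul]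
      _ = Polynomial.aeval yb v
            * (Polynomial.aeval yb ((Polynomial.derivative P).map φ)
                * ι (PowerSeries.derivativeFun y)) := by rw [map_mul]; ring
      _ = Polynomial.aeval yb (v * (-((cderiv P).map φ))) := by
            rw [map_mul, map_neg, ← keyL]
  -- closure under differentiation
  have hstep : ∀ g : PowerSeries ℚ,
      (∃ q : Polynomial (RatFunc ℚ), ι g = Polynomial.aeval yb q) →
      ∃ q' : Polynomial (RatFunc ℚ),
        ι (PowerSeries.derivativeFun g) = Polynomial.aeval yb q' := by
    rintro g ⟨q, hq⟩
    obtain ⟨b, hb⟩ := IsLocalization.integerNormalization_map_to_map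
      (nonZeroDivisors (Polynomial ℚ)) q
    set Q0 := IsLocalization.integerNormalization (nonZeroDivisors (Polynomial ℚ)) q with hQ0
    set r : Polynomial ℚ := (b : Polynomial ℚ) with hr
    have hr0 : r ≠ 0 := nonZeroDivisors.coe_ne_zero b
    have hφr0 : φ r ≠ 0 := fun h => hr0 (hφinj (by rw [h, map_zero]))
    have heq : Polynomial.aeval y Q0
        = algebraMap (Polynomial ℚ) (PowerSeries ℚ) r * g := by
      apply hι
      rw [map_mul, bridge, hb, ← algebraMap_smul (RatFunc ℚ) r q, map_smul, hq,
        Algebra.smul_def, hcast]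
    have hdiff : algebraMap (Polynomial ℚ) (PowerSeries ℚ) r * PowerSeries.derivativeFun g
        = Polynomial.aeval y (cderiv Q0)
          + Polynomial.aeval y (Polynomial.derivative Q0) * PowerSeries.derivativeFun y
          - g * algebraMap (Polynomial ℚ) (PowerSeries ℚ) (Polynomial.derivative r) := by
      have h1 := derivativeFun_aeval y Q0
      rw [heq, PowerSeries.derivativeFun_mul, derivativeFun_algebraMap, smul_eq_mul,
        smul_eq_mul] at h1
      linear_combination h1
    have hL := congrArg ι hdiff
    rw [map_mul, map_sub, map_add, map_mul, map_mul, hcast, hcast, bridge, bridge, hw, hq] at hL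
    refine ⟨Polynomial.C (φ r)⁻¹ * ((cderiv Q0).map φ
      + (Polynomial.derivative Q0).map φ * w
      - q * Polynomial.C (φ (Polynomial.derivative r))), ?_⟩
    have hcne : algebraMap (RatFunc ℚ) (LaurentSeries ℚ) (φ r) ≠ 0 := by
      intro h
      exact hφr0 (hKLinj (by rw [h, map_zero]))
    rw [map_mul, Polynomial.aeval_C, map_sub, map_add, map_mul, map_mul, Polynomial.aeval_C,
      map_inv₀]
    rw [eq_inv_mul_iff_mul_eq₀ hcne, ← hL]
  -- all iterated derivatives are polynomials in `yb`
  have hall : ∀ k : ℕ, ∃ q : Polynomial (RatFunc ℚ),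
      ι ((PowerSeries.derivativeFun)^[k] y) = Polynomial.aeval yb q := by
    intro k
    induction k with
    | zero => exact ⟨Polynomial.X, by simp [hybdef]⟩
    | succ m ih =>
        rw [Function.iterate_succ']
        exact hstep _ ih
  choose qs hqs using fun k : Fin (n + 1) => hall k
  -- coordinate vectors
  set W : Fin (n + 1) → (Fin n → RatFunc ℚ) := fun k j => ((qs k) %ₘ μ).coeff j with hW
  have hnli : ¬ LinearIndependent (RatFunc ℚ) W := by
    intro h
    have h1 := h.fintype_card_le_finrank
    rw [Fintype.card_fin, Module.finrank_fintype_fun_eq_card, Fintype.card_fin] at h1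
    omega
  obtain ⟨c, hc0, i0, hi0⟩ := Fintype.not_linearIndependent_iff.mp hnli
  have hzero : ∀ j : Fin n, ∑ k : Fin (n + 1), c k * W k j = 0 := by
    intro j
    have := congrFun hc0 j
    simpa [Finset.sum_apply, Pi.smul_apply, smul_eq_mul] using this
  have hsum : ∑ k : Fin (n + 1),
      algebraMap (RatFunc ℚ) (LaurentSeries ℚ) (c k)
        * ι ((PowerSeries.derivativeFun)^[(k : ℕ)] y) = 0 := by
    have hterm : ∀ k : Fin (n + 1),
        algebraMap (RatFunc ℚ) (LaurentSeries ℚ) (c k)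
            * ι ((PowerSeries.derivativeFun)^[(k : ℕ)] y)
          = ∑ j : Fin n, algebraMap (RatFunc ℚ) (LaurentSeries ℚ) (c k)
              * (algebraMap (RatFunc ℚ) (LaurentSeries ℚ) (W k j) * yb ^ (j : ℕ)) := by
      intro k
      rw [hqs k, hred (qs k), Finset.mul_sum]
    rw [Finset.sum_congr rfl (fun k _ => hterm k), Finset.sum_comm]
    apply Finset.sum_eq_zero
    intro j _
    calc ∑ k : Fin (n + 1), algebraMap (RatFunc ℚ) (LaurentSeries ℚ) (c k)
            * (algebraMap (RatFunc ℚ) (LaurentSeries ℚ) (W k j) * yb ^ (j : ℕ))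
        = (∑ k : Fin (n + 1),
            algebraMap (RatFunc ℚ) (LaurentSeries ℚ) (c k * W k j)) * yb ^ (j : ℕ) := by
          rw [Finset.sum_mul]
          exact Finset.sum_congr rfl (fun k _ => by rw [map_mul]; ring)
      _ = 0 := by rw [← map_sum, hzero j, map_zero, zero_mul]
  obtain ⟨b, hb⟩ := IsLocalization.exist_integer_multiples
    (nonZeroDivisors (Polynomial ℚ)) Finset.univ c
  choose a ha using fun i => hb i (Finset.mem_univ i)
  refine ⟨a, ⟨i0, ?_⟩, ?_⟩
  · intro h
    have h1 := ha i0
    rw [h, map_zero] at h1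
    have hbne : (b : Polynomial ℚ) ≠ 0 := nonZeroDivisors.coe_ne_zero b
    have h3 : ((b : Polynomial ℚ) • c i0 : RatFunc ℚ) ≠ 0 := by
      rw [Algebra.smul_def]
      exact mul_ne_zero (fun hc => hbne (hφinj (by rw [hc, map_zero]))) hi0
    exact h3 h1.symm
  · apply hι
    rw [map_sum, map_zero]
    have hterm : ∀ i : Fin (n + 1),
        ι ((a i : PowerSeries ℚ) * (PowerSeries.derivativeFun)^[(i : ℕ)] y)
          = algebraMap (RatFunc ℚ) (LaurentSeries ℚ) (φ (b : Polynomial ℚ))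
              * (algebraMap (RatFunc ℚ) (LaurentSeries ℚ) (c i)
                  * ι ((PowerSeries.derivativeFun)^[(i : ℕ)] y)) := by
      intro i
      rw [map_mul, ← algebraMap_polynomial_powerSeries_eq_coe, hcast,
        ha i, Algebra.smul_def, map_mul]
      ring
    rw [Finset.sum_congr rfl (fun i _ => hterm i), ← Finset.mul_sum, hsum, mul_zero]
end

section
/- Let p be a prime and b(x) ∈ 𝔽_p(x). The first-order differential equation y' + b(x)·y = 0 has a nonzero solution in 𝔽_p(x) if and only if b(x) has at most simple poles, all residues of b(x) lie in the prime field 𝔽_p (viewed inside the algebraic closure), and b(x) vanishes at infinity (i.e. in the partial fraction decomposition of b(x) the polynomial part is zero). -/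
open Polynomial

/-- Formal derivative of a rational function, via the quotient rule on the
canonical numerator/denominator representation. -/
noncomputable def rderiv {F : Type*} [Field F] (f : RatFunc F) : RatFunc F :=
  algebraMap (Polynomial F) (RatFunc F)
      (Polynomial.derivative f.num * f.denom - f.num * Polynomial.derivative f.denom) /
    algebraMap (Polynomial F) (RatFunc F) (f.denom ^ 2)

/-- Base change of a rational function along a field embedding `f : F →+* L`. -/
noncomputable def liftRF {F L : Type*} [Field F] [Field L] (f : F →+* L)
    (b : RatFunc F) : RatFunc L :=
  algebraMap (Polynomial L) (RatFunc L) (b.num.map f) /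
    algebraMap (Polynomial L) (RatFunc L) (b.denom.map f)

section RD
variable {F : Type*} [Field F]

theorem amap_ne_zero {P : F[X]} (h : P ≠ 0) : algebraMap F[X] (RatFunc F) P ≠ 0 := by
  simpa using (map_ne_zero_iff _ (RatFunc.algebraMap_injective F)).mpr h

theorem num_mul_eq (P : F[X]) {Q : F[X]} (hQ : Q ≠ 0) :
    (algebraMap F[X] (RatFunc F) P / algebraMap F[X] (RatFunc F) Q).num * Q =
      P * (algebraMap F[X] (RatFunc F) P / algebraMap F[X] (RatFunc F) Q).denom := by
  set f := algebraMap F[X] (RatFunc F) P / algebraMap F[X] (RatFunc F) Q with hf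
  have h1 : algebraMap F[X] (RatFunc F) f.num / algebraMap F[X] (RatFunc F) f.denom = f :=
    RatFunc.num_div_denom f
  have h2 : algebraMap F[X] (RatFunc F) f.num * algebraMap F[X] (RatFunc F) Q
      = algebraMap F[X] (RatFunc F) P * algebraMap F[X] (RatFunc F) f.denom := by
    rw [div_eq_div_iff (amap_ne_zero f.denom_ne_zero) (amap_ne_zero hQ)] at h1
    rw [hf] at h1 ⊢
    exact h1
  apply RatFunc.algebraMap_injective
  simpa using h2

theorem rderiv_div (P : F[X]) {Q : F[X]} (hQ : Q ≠ 0) :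
    rderiv (algebraMap F[X] (RatFunc F) P / algebraMap F[X] (RatFunc F) Q) =
      algebraMap F[X] (RatFunc F) (derivative P * Q - P * derivative Q) /
        algebraMap F[X] (RatFunc F) (Q ^ 2) := by
  set f := algebraMap F[X] (RatFunc F) P / algebraMap F[X] (RatFunc F) Q with hf
  have h : f.num * Q = P * f.denom := num_mul_eq P hQ
  have h' : derivative f.num * Q + f.num * derivative Q
      = derivative P * f.denom + P * derivative f.denom := by
    have := congrArg derivative h
    simpa [derivative_mul] using this
  have key : (derivative f.num * f.denom - f.num * derivative f.denom) * Q ^ 2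
      = (derivative P * Q - P * derivative Q) * f.denom ^ 2 := by
    linear_combination (Q * f.denom) * h' -
      (derivative f.denom * Q + derivative Q * f.denom) * h
  rw [rderiv, div_eq_div_iff (amap_ne_zero (pow_ne_zero 2 f.denom_ne_zero))
    (amap_ne_zero (pow_ne_zero 2 hQ)), ← map_mul, ← map_mul]
  exact congrArg _ key

theorem rderiv_algebraMap (P : F[X]) :
    rderiv (algebraMap F[X] (RatFunc F) P) = algebraMap F[X] (RatFunc F) (derivative P) := by
  have := rderiv_div P (one_ne_zero : (1 : F[X]) ≠ 0)
  simpa [derivative_one] using this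

theorem rderiv_div_mul_div (P R : F[X]) {Q S : F[X]} (hQ : Q ≠ 0) (hS : S ≠ 0) :
    rderiv (algebraMap F[X] (RatFunc F) P / algebraMap F[X] (RatFunc F) Q *
        (algebraMap F[X] (RatFunc F) R / algebraMap F[X] (RatFunc F) S)) =
      rderiv (algebraMap F[X] (RatFunc F) P / algebraMap F[X] (RatFunc F) Q) *
          (algebraMap F[X] (RatFunc F) R / algebraMap F[X] (RatFunc F) S) +
        algebraMap F[X] (RatFunc F) P / algebraMap F[X] (RatFunc F) Q *
          rderiv (algebraMap F[X] (RatFunc F) R / algebraMap F[X] (RatFunc F) S) := by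
  have hmul : algebraMap F[X] (RatFunc F) P / algebraMap F[X] (RatFunc F) Q *
      (algebraMap F[X] (RatFunc F) R / algebraMap F[X] (RatFunc F) S) =
      algebraMap F[X] (RatFunc F) (P * R) / algebraMap F[X] (RatFunc F) (Q * S) := by
    rw [map_mul, map_mul, div_mul_div_comm]
  rw [hmul, rderiv_div _ (mul_ne_zero hQ hS), rderiv_div _ hQ, rderiv_div _ hS]
  have h1 : algebraMap F[X] (RatFunc F) Q ≠ 0 := amap_ne_zero hQ
  have h2 : algebraMap F[X] (RatFunc F) S ≠ 0 := amap_ne_zero hS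
  simp only [derivative_mul, map_mul, map_sub, map_add, map_pow]
  field_simp
  ring

theorem rderiv_mul (f g : RatFunc F) :
    rderiv (f * g) = rderiv f * g + f * rderiv g := by
  conv_lhs => rw [← RatFunc.num_div_denom f, ← RatFunc.num_div_denom g]
  conv_rhs => rw [← RatFunc.num_div_denom f, ← RatFunc.num_div_denom g]
  exact rderiv_div_mul_div _ _ f.denom_ne_zero g.denom_ne_zero

end RD

section LogD
variable {F : Type*} [Field F]

noncomputable def logd (P : F[X]) : RatFunc F :=
  algebraMap F[X] (RatFunc F) (derivative P) / algebraMap F[X] (RatFunc F) P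

theorem logd_mul {P Q : F[X]} (hP : P ≠ 0) (hQ : Q ≠ 0) :
    logd (P * Q) = logd P + logd Q := by
  unfold logd
  rw [div_add_div _ _ (amap_ne_zero hP) (amap_ne_zero hQ)]
  simp only [derivative_mul, map_mul, map_add]

theorem logd_C (c : F) : logd (C c) = 0 := by
  simp [logd]

theorem logd_X_sub_C (r : F) :
    logd (X - C r) = (RatFunc.X - RatFunc.C r)⁻¹ := by
  rw [logd, derivative_sub, derivative_X, derivative_C, sub_zero, map_one, map_sub,
    RatFunc.algebraMap_X, RatFunc.algebraMap_C, one_div]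

theorem logd_prod_multiset {c : F} (hc : c ≠ 0) (M : Multiset F) :
    logd (C c * (M.map fun r => X - C r).prod) =
      (M.map fun r => (RatFunc.X - RatFunc.C r)⁻¹).sum := by
  induction M using Multiset.induction_on with
  | empty => simp [logd_C]
  | cons r M ih =>
    have hprod : ((M.map fun r => X - C r).prod : F[X]) ≠ 0 := by
      apply Monic.ne_zero
      apply monic_multiset_prod_of_monic
      intro a _
      exact monic_X_sub_C a
    have hrw : C c * ((r ::ₘ M).map fun r => X - C r).prod
        = (X - C r) * (C c * (M.map fun r => X - C r).prod) := by
      rw [Multiset.map_cons, Multiset.prod_cons]; ring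
    rw [hrw, logd_mul (X_sub_C_ne_zero r) (mul_ne_zero (fun h => hc (by simpa using h)) hprod),
      logd_X_sub_C, ih, Multiset.map_cons, Multiset.sum_cons]

theorem logd_eq_sum_roots [IsAlgClosed F] {P : F[X]} (hP : P ≠ 0) :
    logd P = ((P.roots).map fun r => (RatFunc.X - RatFunc.C r)⁻¹).sum := by
  conv_lhs => rw [← C_leadingCoeff_mul_prod_multiset_X_sub_C (splits_iff_card_roots.mp (IsAlgClosed.splits P))]
  exact logd_prod_multiset (leadingCoeff_ne_zero.mpr hP) _

noncomputable def pfrac (s : Finset F) (w : F → F) : RatFunc F :=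
  ∑ x ∈ s, RatFunc.C (w x) * (RatFunc.X - RatFunc.C x)⁻¹

theorem pfrac_zero {s : Finset F} {w : F → F} (h : pfrac s w = 0) :
    ∀ x ∈ s, w x = 0 := by
  classical
  set D : F[X] := ∏ y ∈ s, (X - C y) with hD
  have hDne : D ≠ 0 := by
    rw [hD]
    exact Finset.prod_ne_zero_iff.mpr fun y _ => X_sub_C_ne_zero y
  set Pn : F[X] := ∑ x ∈ s, C (w x) * ∏ y ∈ s.erase x, (X - C y) with hPn
  have key : pfrac s w * algebraMap F[X] (RatFunc F) D = algebraMap F[X] (RatFunc F) Pn := by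
    rw [pfrac, Finset.sum_mul, hPn, map_sum]
    refine Finset.sum_congr rfl fun x hx => ?_
    have hsplit : D = (X - C x) * ∏ y ∈ s.erase x, (X - C y) := (Finset.mul_prod_erase s _ hx).symm
    have hxne : algebraMap F[X] (RatFunc F) (X - C x) ≠ 0 := amap_ne_zero (X_sub_C_ne_zero x)
    rw [hsplit, map_mul, map_mul, RatFunc.algebraMap_C]
    have hXC : (RatFunc.X - RatFunc.C x) = algebraMap F[X] (RatFunc F) (X - C x) := by
      rw [map_sub, RatFunc.algebraMap_X, RatFunc.algebraMap_C]
    rw [hXC]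
    have hA : (RatFunc.X - RatFunc.C x) ≠ 0 := hXC ▸ hxne
    field_simp
  have hPn0 : Pn = 0 := by
    rw [h, zero_mul] at key
    exact RatFunc.algebraMap_injective F (by simpa using key.symm)
  intro x hx
  have heval := congrArg (Polynomial.eval x) hPn0
  rw [hPn, eval_finset_sum] at heval
  simp only [eval_zero] at heval
  rw [Finset.sum_eq_single x] at heval
  · simp only [eval_mul, eval_C, eval_prod, eval_sub, eval_X] at heval
    have hprodne : (∏ y ∈ s.erase x, (x - y)) ≠ 0 :=
      Finset.prod_ne_zero_iff.mpr fun y hy => sub_ne_zero.mpr (Ne.symm (Finset.mem_erase.mp hy).1)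
    exact (mul_eq_zero.mp heval).resolve_right hprodne
  · intro x' hx' hne
    simp only [eval_mul, eval_C, eval_prod, eval_sub, eval_X]
    rw [Finset.prod_eq_zero (Finset.mem_erase.mpr ⟨hne.symm, hx⟩) (by ring)]
    ring
  · intro hxx; exact absurd hx hxx

theorem pfrac_inj {s t : Finset F} {w v : F → F} (hw : ∀ x ∈ s, w x ≠ 0)
    (hv : ∀ x ∈ t, v x ≠ 0) (h : pfrac s w = pfrac t v) :
    s = t ∧ ∀ x ∈ s, w x = v x := by
  classical
  set u : F → F := fun x => (if x ∈ s then w x else 0) - (if x ∈ t then v x else 0) with hu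
  have habs : ∀ (s' : Finset F) (w' : F → F), s' ⊆ s ∪ t →
      (∑ x ∈ s ∪ t, RatFunc.C (if x ∈ s' then w' x else 0) * (RatFunc.X - RatFunc.C x)⁻¹)
        = pfrac s' w' := by
    intro s' w' hsub
    rw [pfrac]
    rw [← Finset.sum_subset hsub (fun x _ hxs => by rw [if_neg hxs, map_zero, zero_mul])]
    exact Finset.sum_congr rfl fun x hx => by rw [if_pos hx]
  have hz : pfrac (s ∪ t) u = 0 := by
    rw [pfrac]
    simp only [hu, map_sub, sub_mul]
    rw [Finset.sum_sub_distrib, habs s w Finset.subset_union_left,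
      habs t v Finset.subset_union_right, h, sub_self]
  have hu0 := pfrac_zero hz
  have hst : s = t := by
    ext x
    constructor
    · intro hxs
      by_contra hxt
      have := hu0 x (Finset.mem_union_left _ hxs)
      rw [hu] at this
      simp only [if_pos hxs, if_neg hxt, sub_zero] at this
      exact hw x hxs this
    · intro hxt
      by_contra hxs
      have := hu0 x (Finset.mem_union_right _ hxt)
      simp only [hu, if_pos hxt, if_neg hxs, zero_sub, neg_eq_zero] at this
      exact hv x hxt this
  refine ⟨hst, fun x hxs => ?_⟩
  have hxt : x ∈ t := hst ▸ hxs
  have := hu0 x (Finset.mem_union_left _ hxs)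
  simp only [hu, if_pos hxs, if_pos hxt, sub_eq_zero] at this
  exact this

end LogD

section Lift
variable {F L : Type*} [Field F] [Field L] (ι : F →+* L)

theorem lift_comap :
    nonZeroDivisors F[X] ≤ (nonZeroDivisors L[X]).comap (Polynomial.mapRingHom ι) := by
  intro P hP
  simp only [Submonoid.mem_comap, mem_nonZeroDivisors_iff_ne_zero, coe_mapRingHom]
  intro h
  exact mem_nonZeroDivisors_iff_ne_zero.mp hP
    ((Polynomial.map_eq_zero_iff ι.injective).mp h)

noncomputable def LiftRF : RatFunc F →+* RatFunc L :=
  RatFunc.mapRingHom (Polynomial.mapRingHom ι) (lift_comap ι)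

theorem LiftRF_div (P Q : F[X]) :
    LiftRF ι (algebraMap F[X] (RatFunc F) P / algebraMap F[X] (RatFunc F) Q) =
      algebraMap L[X] (RatFunc L) (P.map ι) / algebraMap L[X] (RatFunc L) (Q.map ι) := by
  have h : LiftRF ι (algebraMap F[X] (RatFunc F) P / algebraMap F[X] (RatFunc F) Q)
      = RatFunc.map (Polynomial.mapRingHom ι) (lift_comap ι)
        (algebraMap F[X] (RatFunc F) P / algebraMap F[X] (RatFunc F) Q) := rfl
  rw [h, RatFunc.map_apply_div]
  rfl

theorem liftRF_eq (b : RatFunc F) : liftRF ι b = LiftRF ι b := by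
  conv_rhs => rw [← RatFunc.num_div_denom b]
  rw [liftRF, LiftRF_div]

theorem LiftRF_algebraMap (P : F[X]) :
    LiftRF ι (algebraMap F[X] (RatFunc F) P) = algebraMap L[X] (RatFunc L) (P.map ι) := by
  have := LiftRF_div ι P 1
  simpa using this

theorem LiftRF_C (c : F) : LiftRF ι (RatFunc.C c) = RatFunc.C (ι c) := by
  rw [← RatFunc.algebraMap_C, LiftRF_algebraMap, Polynomial.map_C, RatFunc.algebraMap_C]

theorem LiftRF_X : LiftRF ι RatFunc.X = RatFunc.X := by
  rw [← RatFunc.algebraMap_X, LiftRF_algebraMap, Polynomial.map_X, RatFunc.algebraMap_X]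

theorem LiftRF_injective : Function.Injective (LiftRF ι) :=
  RatFunc.map_injective (Polynomial.mapRingHom ι) (lift_comap ι)
    (Polynomial.map_injective ι ι.injective)

theorem LiftRF_pfrac (s : Finset F) (w : F → F) :
    LiftRF ι (pfrac s w) =
      ∑ x ∈ s, RatFunc.C (ι (w x)) * (RatFunc.X - RatFunc.C (ι x))⁻¹ := by
  rw [pfrac, map_sum]
  refine Finset.sum_congr rfl fun x _ => ?_
  rw [map_mul, LiftRF_C, map_inv₀, map_sub, LiftRF_X, LiftRF_C]

theorem LiftRF_logd (P : F[X]) : LiftRF ι (logd P) = logd (P.map ι) := by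
  rw [logd, LiftRF_div, logd, derivative_map]

end Lift

section Conj
variable (p : ℕ) [Fact p.Prime]

theorem pfconj_inv (b : RatFunc (ZMod p)) (s : Finset (AlgebraicClosure (ZMod p)))
    (w : AlgebraicClosure (ZMod p) → ZMod p) (hs : ∀ x ∈ s, w x ≠ 0)
    (hb : LiftRF (algebraMap (ZMod p) (AlgebraicClosure (ZMod p))) b =
      pfrac s (fun x => algebraMap (ZMod p) (AlgebraicClosure (ZMod p)) (w x)))
    (ψ : AlgebraicClosure (ZMod p) →ₐ[ZMod p] AlgebraicClosure (ZMod p)) :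
    ∀ x ∈ s, ψ x ∈ s ∧ w (ψ x) = w x := by
  classical
  let K := AlgebraicClosure (ZMod p)
  let ι : ZMod p →+* K := algebraMap (ZMod p) K
  have ψinj : Function.Injective ψ := ψ.toRingHom.injective
  have ιinj : Function.Injective ι := ι.injective
  set Φ : RatFunc K →+* RatFunc K := LiftRF ψ.toRingHom with hΦ
  have hcomp : (ψ.toRingHom).comp ι = ι := RingHom.ext fun z => ψ.commutes z
  have step1 : Φ (LiftRF ι b) = LiftRF ι b := by
    conv_lhs => rw [← RatFunc.num_div_denom b, LiftRF_div, LiftRF_div]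
    conv_rhs => rw [← RatFunc.num_div_denom b, LiftRF_div]
    rw [Polynomial.map_map, Polynomial.map_map, hcomp]
  set v : K → K := fun y => ι (w (Function.invFun ψ y)) with hv
  have step2 : Φ (pfrac s fun x => ι (w x)) = pfrac (s.image ψ) v := by
    rw [hΦ, LiftRF_pfrac, pfrac,
      Finset.sum_image (fun x _ y _ h => ψinj h)]
    refine Finset.sum_congr rfl fun x _ => ?_
    have h1 : ψ.toRingHom (ι (w x)) = ι (w x) := ψ.commutes _
    have h2 : v (ψ x) = ι (w x) := by
      rw [hv]
      simp only [Function.leftInverse_invFun ψinj x]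
    rw [h1, h2]
    rfl
  have hmain : pfrac s (fun x => ι (w x)) = pfrac (s.image ψ) v := by
    rw [← step2, ← hb]
    exact step1.symm
  have hnz1 : ∀ x ∈ s, ι (w x) ≠ 0 := fun x hx h =>
    hs x hx (ιinj (by rw [h, map_zero]))
  have hnz2 : ∀ y ∈ s.image ψ, v y ≠ 0 := by
    intro y hy
    obtain ⟨x, hx, rfl⟩ := Finset.mem_image.mp hy
    rw [hv]
    simp only [Function.leftInverse_invFun ψinj x]
    exact hnz1 x hx
  obtain ⟨hset, hvals⟩ := pfrac_inj hnz1 hnz2 hmain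
  intro x hx
  have hψx : ψ x ∈ s := by rw [hset]; exact Finset.mem_image_of_mem ψ hx
  refine ⟨hψx, ?_⟩
  have := hvals (ψ x) hψx
  rw [hv] at this
  simp only [Function.leftInverse_invFun ψinj x] at this
  exact ιinj this

theorem pfroot_mem (b : RatFunc (ZMod p)) (s : Finset (AlgebraicClosure (ZMod p)))
    (w : AlgebraicClosure (ZMod p) → ZMod p) (hs : ∀ x ∈ s, w x ≠ 0)
    (hb : LiftRF (algebraMap (ZMod p) (AlgebraicClosure (ZMod p))) b =
      pfrac s (fun x => algebraMap (ZMod p) (AlgebraicClosure (ZMod p)) (w x)))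
    (a₀ : AlgebraicClosure (ZMod p)) (ha₀ : a₀ ∈ s)
    (r : AlgebraicClosure (ZMod p))
    (hr : r ∈ ((minpoly (ZMod p) a₀).map
      (algebraMap (ZMod p) (AlgebraicClosure (ZMod p)))).roots) :
    r ∈ s ∧ w r = w a₀ := by
  have hroot : r ∈ (minpoly (ZMod p) a₀).rootSet (AlgebraicClosure (ZMod p)) := by
    rw [Polynomial.mem_rootSet']
    exact ⟨(Polynomial.mem_roots'.mp hr).1,
      by rw [aeval_def, ← eval_map]; exact (Polynomial.mem_roots'.mp hr).2⟩
  rw [← Algebra.IsAlgebraic.range_eval_eq_rootSet_minpoly] at hroot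
  obtain ⟨ψ, hψ⟩ := hroot
  have hψ' : ψ a₀ = r := hψ
  obtain ⟨hmem, hval⟩ := pfconj_inv p b s w hs hb ψ a₀ ha₀
  rw [hψ'] at hmem hval
  exact ⟨hmem, hval⟩

end Conj

theorem msum_nodup {α M : Type*} [AddCommMonoid M] [DecidableEq α] {m : Multiset α}
    (h : m.Nodup) (f : α → M) : (m.map f).sum = ∑ x ∈ m.toFinset, f x := by
  rw [Finset.sum_multiset_map_count]
  exact Finset.sum_congr rfl fun x hx => by
    rw [Multiset.count_eq_one_of_mem h (Multiset.mem_toFinset.mp hx), one_nsmul]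

section Engine
variable (p : ℕ) [Fact p.Prime]

theorem exists_sol (n : ℕ) (b : RatFunc (ZMod p)) (s : Finset (AlgebraicClosure (ZMod p)))
    (w : AlgebraicClosure (ZMod p) → ZMod p) (hcard : s.card = n)
    (hs : ∀ x ∈ s, w x ≠ 0)
    (hb : LiftRF (algebraMap (ZMod p) (AlgebraicClosure (ZMod p))) b =
      pfrac s (fun x => algebraMap (ZMod p) (AlgebraicClosure (ZMod p)) (w x))) :
    ∃ f : RatFunc (ZMod p), f ≠ 0 ∧ rderiv f + b * f = 0 := by
  classical
  induction n using Nat.strong_induction_on generalizing b s w with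
  | _ n IH =>
  rcases s.eq_empty_or_nonempty with rfl | ⟨a₀, ha₀⟩
  · -- empty: b = 0, take f = 1
    have hb0 : b = 0 := by
      apply LiftRF_injective (algebraMap (ZMod p) (AlgebraicClosure (ZMod p)))
      rw [hb, map_zero, pfrac, Finset.sum_empty]
    refine ⟨1, one_ne_zero, ?_⟩
    have h1 : (1 : RatFunc (ZMod p)) = algebraMap (ZMod p)[X] (RatFunc (ZMod p)) 1 := by
      rw [map_one]
    rw [hb0, h1, rderiv_algebraMap, derivative_one, map_zero, zero_mul, add_zero]
  · set ι : ZMod p →+* AlgebraicClosure (ZMod p) :=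
      algebraMap (ZMod p) (AlgebraicClosure (ZMod p)) with hι
    have hint : IsIntegral (ZMod p) a₀ := Algebra.IsIntegral.isIntegral a₀
    set q : (ZMod p)[X] := minpoly (ZMod p) a₀ with hqdef
    have hq0 : q ≠ 0 := minpoly.ne_zero hint
    set Q : (AlgebraicClosure (ZMod p))[X] := q.map ι with hQdef
    have hQ0 : Q ≠ 0 := (Polynomial.map_ne_zero_iff ι.injective).mpr hq0
    have hsep : q.Separable := PerfectField.separable_of_irreducible (minpoly.irreducible hint)
    have hnodup : Q.roots.Nodup := nodup_roots (hsep.map)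
    set R : Finset (AlgebraicClosure (ZMod p)) := Q.roots.toFinset with hRdef
    have ha₀R : a₀ ∈ R := by
      rw [hRdef, Multiset.mem_toFinset, Polynomial.mem_roots']
      refine ⟨hQ0, ?_⟩
      rw [Polynomial.IsRoot, hQdef, eval_map, ← aeval_def, hqdef, minpoly.aeval]
    have hRmem : ∀ r ∈ R, r ∈ s ∧ w r = w a₀ := fun r hr =>
      pfroot_mem p b s w hs hb a₀ ha₀ r (Multiset.mem_toFinset.mp hr)
    have hRsub : R ⊆ s := fun r hr => (hRmem r hr).1
    set c : ZMod p := w a₀ with hcdef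
    have hc : c ≠ 0 := hs a₀ ha₀
    set b₂ : RatFunc (ZMod p) := b - RatFunc.C c * logd q with hb₂def
    have hlogdQ : logd Q = ∑ r ∈ R, (RatFunc.X - RatFunc.C r)⁻¹ := by
      rw [logd_eq_sum_roots hQ0, msum_nodup hnodup]
    have hb₂ : LiftRF ι b₂ = pfrac (s \ R) (fun x => ι (w x)) := by
      rw [hb₂def, map_sub, map_mul, LiftRF_C, LiftRF_logd, ← hQdef, hlogdQ, hb]
      have hsplit : pfrac s (fun x => ι (w x)) =
          pfrac (s \ R) (fun x => ι (w x)) + ∑ r ∈ R, RatFunc.C (ι c) *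
            (RatFunc.X - RatFunc.C r)⁻¹ := by
        rw [pfrac, pfrac, ← Finset.sum_sdiff hRsub]
        congr 1
        exact Finset.sum_congr rfl fun r hr => by rw [(hRmem r hr).2]
      rw [hsplit, Finset.mul_sum]
      ring
    have hcard2 : (s \ R).card < n := by
      rw [← hcard]
      exact Finset.card_lt_card (Finset.sdiff_ssubset hRsub ⟨a₀, ha₀R⟩)
    obtain ⟨f₂, hf₂0, hf₂⟩ := IH _ hcard2 b₂ (s \ R) w rfl
      (fun x hx => hs x (Finset.mem_sdiff.mp hx).1) hb₂
    -- now multiply by q ^ e, e = (-c).val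
    have hene : (-c).val ≠ 0 := by
      simp only [ne_eq, ZMod.val_eq_zero, neg_eq_zero]
      exact hc
    obtain ⟨e', he'⟩ := Nat.exists_eq_succ_of_ne_zero hene
    have he : ((e' + 1 : ℕ) : ZMod p) = -c := by
      rw [← Nat.succ_eq_add_one, ← he', ZMod.natCast_val, ZMod.cast_id]
    refine ⟨f₂ * algebraMap (ZMod p)[X] (RatFunc (ZMod p)) (q ^ (e' + 1)),
      mul_ne_zero hf₂0 (amap_ne_zero (pow_ne_zero _ hq0)), ?_⟩
    have hrd2 : rderiv f₂ = -(b₂ * f₂) := eq_neg_of_add_eq_zero_left hf₂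
    have hA : algebraMap (ZMod p)[X] (RatFunc (ZMod p)) q ≠ 0 := amap_ne_zero hq0
    rw [rderiv_mul, rderiv_algebraMap, derivative_pow, hrd2, hb₂def]
    simp only [Nat.add_sub_cancel, map_mul, map_pow, RatFunc.algebraMap_C, he, logd]
    field_simp
    rw [map_neg]
    ring
end Engine

theorem forward_repr {F : Type*} [Field F] {b f : RatFunc F} (hf : f ≠ 0)
    (heq : rderiv f + b * f = 0) :
    b = algebraMap F[X] (RatFunc F) (f.num * derivative f.denom - derivative f.num * f.denom) /
        algebraMap F[X] (RatFunc F) (f.denom * f.num) := by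
  have hn := RatFunc.num_ne_zero hf
  have hd := f.denom_ne_zero
  have h2 : b * f = -rderiv f := by
    rw [add_comm] at heq; exact eq_neg_of_add_eq_zero_left heq
  unfold rderiv at h2
  conv_lhs at h2 => rw [← RatFunc.num_div_denom f]
  have hαn : algebraMap F[X] (RatFunc F) f.num ≠ 0 := amap_ne_zero hn
  have hαd : algebraMap F[X] (RatFunc F) f.denom ≠ 0 := amap_ne_zero hd
  rw [eq_div_iff (amap_ne_zero (mul_ne_zero hd hn))]
  apply mul_right_cancel₀ hαd
  rw [← mul_div_assoc, ← neg_div] at h2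
  rw [div_eq_div_iff hαd (amap_ne_zero (pow_ne_zero 2 hd))] at h2
  simp only [map_mul, map_sub, map_pow] at h2 ⊢
  linear_combination h2

theorem msum_subset {α M : Type*} [AddCommMonoid M] [DecidableEq α] {m : Multiset α}
    {S : Finset α} (h : m.toFinset ⊆ S) (g : α → M) :
    (m.map g).sum = ∑ x ∈ S, m.count x • g x := by
  rw [Finset.sum_multiset_map_count]
  exact Finset.sum_subset h fun x _ hx => by
    rw [Multiset.count_eq_zero_of_notMem (fun hc => hx (Multiset.mem_toFinset.mpr hc)),
      zero_nsmul]

theorem logd_sub_repr {L : Type*} [Field L] {N D : L[X]} (hN : N ≠ 0) (hD : D ≠ 0) :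
    algebraMap L[X] (RatFunc L) (N * derivative D - derivative N * D) /
        algebraMap L[X] (RatFunc L) (D * N) = logd D - logd N := by
  rw [logd, logd, div_sub_div _ _ (amap_ne_zero hD) (amap_ne_zero hN)]
  simp only [map_mul, map_sub]
  rw [div_eq_div_iff (mul_ne_zero (amap_ne_zero hD) (amap_ne_zero hN))
    (mul_ne_zero (amap_ne_zero hD) (amap_ne_zero hN))]
  ring

theorem forward_dir (p : ℕ) [Fact p.Prime] (b f : RatFunc (ZMod p)) (hf : f ≠ 0)
    (heq : rderiv f + b * f = 0) :
    ∃ (m : ℕ) (a : Fin m → AlgebraicClosure (ZMod p)) (β : Fin m → ZMod p),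
      Function.Injective a ∧
      liftRF (algebraMap (ZMod p) (AlgebraicClosure (ZMod p))) b =
        ∑ i : Fin m,
          RatFunc.C (algebraMap (ZMod p) (AlgebraicClosure (ZMod p)) (β i)) *
            (RatFunc.X - RatFunc.C (a i))⁻¹ := by
  classical
  set ι : ZMod p →+* AlgebraicClosure (ZMod p) :=
    algebraMap (ZMod p) (AlgebraicClosure (ZMod p)) with hι
  have hn := RatFunc.num_ne_zero hf
  have hd := f.denom_ne_zero
  set N : (AlgebraicClosure (ZMod p))[X] := f.num.map ι with hNdef
  set D : (AlgebraicClosure (ZMod p))[X] := f.denom.map ι with hDdef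
  have hN : N ≠ 0 := (Polynomial.map_ne_zero_iff ι.injective).mpr hn
  have hD : D ≠ 0 := (Polynomial.map_ne_zero_iff ι.injective).mpr hd
  have h2 : LiftRF ι b = logd D - logd N := by
    rw [forward_repr hf heq, LiftRF_div]
    simp only [Polynomial.map_mul, Polynomial.map_sub, ← derivative_map, ← hNdef, ← hDdef]
    exact logd_sub_repr hN hD
  set S : Finset (AlgebraicClosure (ZMod p)) := D.roots.toFinset ∪ N.roots.toFinset with hSdef
  set γ : AlgebraicClosure (ZMod p) → ZMod p :=
    fun r => ((D.roots.count r : ZMod p) - (N.roots.count r : ZMod p)) with hγdef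
  have h3 : LiftRF ι b = ∑ r ∈ S, RatFunc.C (ι (γ r)) * (RatFunc.X - RatFunc.C r)⁻¹ := by
    rw [h2, logd_eq_sum_roots hD, logd_eq_sum_roots hN,
      msum_subset (S := S) Finset.subset_union_left _,
      msum_subset (S := S) Finset.subset_union_right _, ← Finset.sum_sub_distrib]
    refine Finset.sum_congr rfl fun r hr => ?_
    rw [nsmul_eq_mul, nsmul_eq_mul, ← sub_mul]
    congr 1
    simp only [hγdef, map_sub, map_natCast]
  refine ⟨S.card, fun i => ((S.equivFin.symm i : S) : AlgebraicClosure (ZMod p)),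
    fun i => γ ((S.equivFin.symm i : S) : AlgebraicClosure (ZMod p)), ?_, ?_⟩
  · exact fun i j h => S.equivFin.symm.injective (Subtype.coe_injective h)
  · rw [liftRF_eq, h3,
      ← Finset.sum_coe_sort S (fun r => RatFunc.C (ι (γ r)) * (RatFunc.X - RatFunc.C r)⁻¹)]
    exact (Equiv.sum_comp S.equivFin.symm
      (fun x : S => RatFunc.C (ι (γ (x : AlgebraicClosure (ZMod p)))) *
        (RatFunc.X - RatFunc.C ((x : AlgebraicClosure (ZMod p))))⁻¹)).symm

/-- Let `p` be a prime and `b(x) ∈ 𝔽_p(x)`.  The equation `y' + b(x)y = 0` has a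
nonzero solution in `𝔽_p(x)` if and only if, over the algebraic closure of `𝔽_p`,
`b(x)` has at most simple poles, all its residues lie in the prime field `𝔽_p`, and
`b(x)` vanishes at infinity; i.e. iff `b(x) = ∑ᵢ βᵢ/(x − aᵢ)` with the `aᵢ` distinct
points of the algebraic closure and `βᵢ ∈ 𝔽_p`. -/
theorem order_one_rational_solution_charP (p : ℕ) [Fact p.Prime]
    (b : RatFunc (ZMod p)) :
    (∃ f : RatFunc (ZMod p), f ≠ 0 ∧ rderiv f + b * f = 0) ↔
      ∃ (m : ℕ) (a : Fin m → AlgebraicClosure (ZMod p)) (β : Fin m → ZMod p),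
        Function.Injective a ∧
        liftRF (algebraMap (ZMod p) (AlgebraicClosure (ZMod p))) b =
          ∑ i : Fin m,
            RatFunc.C (algebraMap (ZMod p) (AlgebraicClosure (ZMod p)) (β i)) *
              (RatFunc.X - RatFunc.C (a i))⁻¹ := by
  classical
  constructor
  · rintro ⟨f, hf, heq⟩
    exact forward_dir p b f hf heq
  · rintro ⟨m, a, β, hinj, hsum⟩
    set ι : ZMod p →+* AlgebraicClosure (ZMod p) :=
      algebraMap (ZMod p) (AlgebraicClosure (ZMod p)) with hι
    set w : AlgebraicClosure (ZMod p) → ZMod p :=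
      fun x => if h : ∃ i, a i = x then β h.choose else 0 with hwdef
    have hwa : ∀ i, w (a i) = β i := by
      intro i
      have hex : ∃ j, a j = a i := ⟨i, rfl⟩
      rw [hwdef]
      simp only [dif_pos hex]
      exact congrArg β (hinj hex.choose_spec)
    set s : Finset (AlgebraicClosure (ZMod p)) :=
      (Finset.univ.image a).filter (fun x => w x ≠ 0) with hsdef
    have hs : ∀ x ∈ s, w x ≠ 0 := fun x hx => (Finset.mem_filter.mp hx).2
    have hb : LiftRF ι b = pfrac s (fun x => ι (w x)) := by
      rw [← liftRF_eq, hsum, pfrac, hsdef]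
      rw [Finset.sum_filter_of_ne (fun x _ hne => by
        intro hw0
        apply hne
        rw [hw0, map_zero, map_zero, zero_mul])]
      rw [Finset.sum_image (fun x _ y _ h => hinj h)]
      refine Finset.sum_congr rfl fun i _ => ?_
      rw [hwa i]
    exact exists_sol p s.card b s w rfl hs hb
end

section
/- Let p be a prime and b(x) ∈ 𝔽_p(x). In the ring 𝔽_p(x)⟨∂⟩ of differential operators (with ∂·r = r·∂ + r'), one has (∂ + b(x))^p = ∂^p + b_p(x), where b_p = b^{(p−1)} + b^p; moreover b_p(x) lies in 𝔽_p(x^p), i.e. its derivative is zero. -/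
open Polynomial

/-- Multiplication in the Ore ring `F(x)⟨∂⟩` of linear differential operators,
where an operator `∑ aᵢ ∂^i` is represented by the polynomial `∑ aᵢ Xⁱ` with
coefficients in `F(x)`; it is governed by the rule `∂·r = r·∂ + r'`, so that
`(a ∂^i)·(b ∂^j) = ∑_{l ≤ i} C(i,l)·a·b⁽ˡ⁾·∂^{i−l+j}`. -/
noncomputable def omul {F : Type*} [Field F]
    (A B : Polynomial (RatFunc F)) : Polynomial (RatFunc F) :=
  A.sum fun i a => B.sum fun j b =>
    ∑ l ∈ Finset.range (i + 1),
      Polynomial.monomial (i - l + j) ((i.choose l : RatFunc F) * a * rderiv^[l] b)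

/-- Powers in the Ore ring `F(x)⟨∂⟩`. -/
noncomputable def opow {F : Type*} [Field F]
    (A : Polynomial (RatFunc F)) : ℕ → Polynomial (RatFunc F)
  | 0 => 1
  | k + 1 => omul (opow A k) A

namespace Jac

variable {F : Type*} [Field F]

local notation "φ" => algebraMap (Polynomial F) (RatFunc F)

theorem rderiv_eq (a c : Polynomial F) (hc : c ≠ 0) (f : RatFunc F)
    (hf : f * φ c = φ a) :
    rderiv f = φ (derivative a * c - a * derivative c) / φ (c ^ 2) := by
  have hcm : φ c ≠ 0 := RatFunc.algebraMap_ne_zero hc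
  have hdm : φ f.denom ≠ 0 := RatFunc.algebraMap_ne_zero f.denom_ne_zero
  have h : f.num * c = a * f.denom := by
    apply RatFunc.algebraMap_injective F
    have h2 : φ f.num = f * φ f.denom := (div_eq_iff hdm).mp f.num_div_denom
    rw [map_mul, map_mul, h2, mul_right_comm, hf]
  have h' : derivative f.num * c + f.num * derivative c
      = derivative a * f.denom + a * derivative f.denom := by
    have := congrArg derivative h
    simpa [derivative_mul] using this
  rw [rderiv, div_eq_div_iff (RatFunc.algebraMap_ne_zero (pow_ne_zero 2 f.denom_ne_zero))
    (RatFunc.algebraMap_ne_zero (pow_ne_zero 2 hc)), ← map_mul, ← map_mul]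
  congr 1
  linear_combination (-(derivative c * f.denom + c * derivative f.denom)) * h
    + (c * f.denom) * h'

theorem rderiv_algebraMap (P : Polynomial F) : rderiv (φ P) = φ (derivative P) := by
  rw [rderiv_eq P 1 one_ne_zero (φ P) (by rw [map_one, mul_one])]
  simp

theorem rderiv_zero : rderiv (0 : RatFunc F) = 0 := by
  simpa using rderiv_algebraMap (0 : Polynomial F)

theorem rderiv_one : rderiv (1 : RatFunc F) = 0 := by
  simpa using rderiv_algebraMap (1 : Polynomial F)

theorem rderiv_add (f g : RatFunc F) : rderiv (f + g) = rderiv f + rderiv g := by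
  have hdf : φ f.denom ≠ 0 := RatFunc.algebraMap_ne_zero f.denom_ne_zero
  have hdg : φ g.denom ≠ 0 := RatFunc.algebraMap_ne_zero g.denom_ne_zero
  have h2f : φ f.num = f * φ f.denom := (div_eq_iff hdf).mp f.num_div_denom
  have h2g : φ g.num = g * φ g.denom := (div_eq_iff hdg).mp g.num_div_denom
  have key := rderiv_eq (f.num * g.denom + g.num * f.denom) (f.denom * g.denom)
    (mul_ne_zero f.denom_ne_zero g.denom_ne_zero) (f + g)
    (by rw [map_mul, map_add, map_mul, map_mul, h2f, h2g]; ring)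
  rw [key, rderiv, rderiv]
  have e1 := RatFunc.algebraMap_ne_zero (pow_ne_zero 2 f.denom_ne_zero)
  have e2 := RatFunc.algebraMap_ne_zero (pow_ne_zero 2 g.denom_ne_zero)
  have e3 := RatFunc.algebraMap_ne_zero (pow_ne_zero 2 (mul_ne_zero f.denom_ne_zero g.denom_ne_zero))
  rw [div_add_div _ _ e1 e2]
  rw [div_eq_div_iff e3 (mul_ne_zero e1 e2)]
  simp only [← map_mul, ← map_add]
  refine congrArg _ ?_
  simp only [derivative_add, derivative_mul]
  ring

theorem rderiv_div (N D : Polynomial F) (hD : D ≠ 0) :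
    rderiv (φ N / φ D) = φ (derivative N * D - N * derivative D) / φ (D ^ 2) :=
  rderiv_eq _ _ hD _ (div_mul_cancel₀ _ (RatFunc.algebraMap_ne_zero hD))

theorem rderiv_mul (f g : RatFunc F) : rderiv (f * g) = rderiv f * g + f * rderiv g := by
  obtain ⟨N1, D1, hD1, rfl⟩ : ∃ N D, D ≠ 0 ∧ f = φ N / φ D :=
    ⟨f.num, f.denom, f.denom_ne_zero, f.num_div_denom.symm⟩
  obtain ⟨N2, D2, hD2, rfl⟩ : ∃ N D, D ≠ 0 ∧ g = φ N / φ D :=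
    ⟨g.num, g.denom, g.denom_ne_zero, g.num_div_denom.symm⟩
  have hm : φ N1 / φ D1 * (φ N2 / φ D2) = φ (N1 * N2) / φ (D1 * D2) := by
    rw [map_mul, map_mul, div_mul_div_comm]
  rw [hm, rderiv_div _ _ (mul_ne_zero hD1 hD2), rderiv_div _ _ hD1, rderiv_div _ _ hD2]
  have h1 : φ D1 ≠ 0 := RatFunc.algebraMap_ne_zero hD1
  have h2 : φ D2 ≠ 0 := RatFunc.algebraMap_ne_zero hD2
  have h12 : φ ((D1 * D2) ^ 2) ≠ 0 := RatFunc.algebraMap_ne_zero (pow_ne_zero 2 (mul_ne_zero hD1 hD2))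
  have h1' : φ (D1 ^ 2) ≠ 0 := RatFunc.algebraMap_ne_zero (pow_ne_zero 2 hD1)
  have h2' : φ (D2 ^ 2) ≠ 0 := RatFunc.algebraMap_ne_zero (pow_ne_zero 2 hD2)
  field_simp
  simp only [← map_mul, ← map_add, ← map_sub, ← map_pow]
  refine congrArg _ ?_
  simp only [derivative_mul]
  ring

theorem rderiv_sum {ι : Type*} (s : Finset ι) (f : ι → RatFunc F) :
    rderiv (∑ i ∈ s, f i) = ∑ i ∈ s, rderiv (f i) := by
  classical
  induction s using Finset.induction_on with
  | empty => simpa using rderiv_zero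
  | insert _ _ h ih => rw [Finset.sum_insert h, Finset.sum_insert h, rderiv_add, ih]

theorem rderiv_natCast (n : ℕ) : rderiv ((n : RatFunc F)) = 0 := by
  have : ((n : RatFunc F)) = φ ((n : Polynomial F)) := by push_cast; ring
  rw [this, rderiv_algebraMap]
  simp

theorem rderiv_pow (x : RatFunc F) (n : ℕ) :
    rderiv (x ^ n) = (n : RatFunc F) * x ^ (n - 1) * rderiv x := by
  induction n with
  | zero => simpa using rderiv_one
  | succ m ih =>
    rw [pow_succ, rderiv_mul, ih]
    cases m with
    | zero => simp
    | succ k =>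
      push_cast
      linear_combination ((k : RatFunc F) + 1) * rderiv x * (pow_succ x k).symm

theorem iterate_rderiv_zero (l : ℕ) : rderiv^[l] (0 : RatFunc F) = 0 :=
  Function.iterate_fixed rderiv_zero l

theorem iterate_rderiv_one (l : ℕ) (hl : l ≠ 0) : rderiv^[l] (1 : RatFunc F) = 0 := by
  obtain ⟨m, rfl⟩ := Nat.exists_eq_succ_of_ne_zero hl
  rw [Function.iterate_succ_apply, rderiv_one, iterate_rderiv_zero]

theorem rderiv_quo (P Q : Polynomial F) (hQ : Q ≠ 0) (hQ' : derivative Q = 0) :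
    rderiv (φ P / φ Q) = φ (derivative P) / φ Q := by
  rw [rderiv_div P Q hQ, hQ', mul_zero, sub_zero, pow_two, map_mul, map_mul,
    mul_div_mul_right _ _ (RatFunc.algebraMap_ne_zero hQ)]

theorem iterate_rderiv_quo (P Q : Polynomial F) (hQ : Q ≠ 0) (hQ' : derivative Q = 0) (k : ℕ) :
    rderiv^[k] (φ P / φ Q) = φ (derivative^[k] P) / φ Q := by
  induction k generalizing P with
  | zero => rfl
  | succ m ih =>
    rw [Function.iterate_succ_apply', ih, rderiv_quo _ _ hQ hQ',
      ← Function.iterate_succ_apply' derivative]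

theorem iterate_derivative_charP (p : ℕ) (hp : 0 < p) (hF : (p : F) = 0) (P : Polynomial F) :
    derivative^[p] P = 0 := by
  induction P using Polynomial.induction_on' with
  | add f g hf hg =>
    have : ∀ k (a b : Polynomial F), derivative^[k] (a + b)
        = derivative^[k] a + derivative^[k] b := by
      intro k
      induction k with
      | zero => intro a b; rfl
      | succ m ih =>
        intro a b
        rw [Function.iterate_succ_apply, derivative_add, ih,
          Function.iterate_succ_apply, Function.iterate_succ_apply]
    rw [this, hf, hg, add_zero]
  | monomial n a =>
    rw [← C_mul_X_pow_eq_monomial, iterate_derivative_C_mul, iterate_derivative_X_pow_eq_smul]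
    have hdvd : p ∣ n.descFactorial p := dvd_trans (Nat.dvd_factorial hp le_rfl)
      (Nat.factorial_dvd_descFactorial n p)
    obtain ⟨t, ht⟩ := hdvd
    have : ((n.descFactorial p : F)) = 0 := by
      rw [ht]; push_cast; rw [hF, zero_mul]
    rw [this, zero_smul, mul_zero]

theorem iterate_rderiv_charP (p : ℕ) (hp : 0 < p) (hF : (p : F) = 0) (f : RatFunc F) :
    rderiv^[p] f = 0 := by
  have hD := f.denom_ne_zero
  have hrep : f = φ (f.num * f.denom ^ (p - 1)) / φ (f.denom ^ p) := by
    rw [map_mul, map_pow, map_pow]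
    rw [eq_div_iff (pow_ne_zero p (RatFunc.algebraMap_ne_zero hD)), ← f.num_div_denom]
    have : p = (p - 1) + 1 := (Nat.succ_pred_eq_of_pos hp).symm
    rw [this]
    have h2 : φ f.num = f * φ f.denom :=
      (div_eq_iff (RatFunc.algebraMap_ne_zero hD)).mp f.num_div_denom
    rw [f.num_div_denom, Nat.add_sub_cancel, h2, pow_succ]
    ring
  have hQ' : derivative (f.denom ^ p) = 0 := by
    rw [derivative_pow]
    have : ((p : Polynomial F)) = 0 := by
      rw [← Polynomial.C_eq_natCast, hF, map_zero]
    rw [C_eq_natCast, this, zero_mul, zero_mul]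
  rw [hrep, iterate_rderiv_quo _ _ (pow_ne_zero p hD) hQ',
    iterate_derivative_charP p hp hF, map_zero, zero_div]

section Leibniz

variable {R : Type*} [CommRing R]

theorem iterE_add (E : R → R) (hEadd : ∀ x y, E (x + y) = E x + E y) (k : ℕ) (x y : R) :
    E^[k] (x + y) = E^[k] x + E^[k] y := by
  induction k generalizing x y with
  | zero => rfl
  | succ m ih => rw [Function.iterate_succ_apply, hEadd, ih,
      Function.iterate_succ_apply, Function.iterate_succ_apply]

theorem iter_leibniz (d : R → R) (b : R)
    (hadd : ∀ x y, d (x + y) = d x + d y)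
    (hmul : ∀ x y, d (x * y) = d x * y + x * d y)
    (E : R → R) (hE : ∀ g, E g = d g + b * g) (k : ℕ) (a f : R) :
    E^[k] (a * f)
      = ∑ j ∈ Finset.range (k + 1), (k.choose j : R) * d^[j] a * E^[k - j] f := by
  have hEadd : ∀ x y, E (x + y) = E x + E y := by
    intro x y; rw [hE, hE, hE, hadd]; ring
  induction k generalizing a f with
  | zero => simp
  | succ k ih =>
    have hstep : E (a * f) = a * E f + d a * f := by rw [hE, hE, hmul]; ring
    rw [Function.iterate_succ_apply, hstep, iterE_add E hEadd, ih, ih]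
    have h1 : ∑ j ∈ Finset.range (k + 1), (k.choose j : R) * d^[j] a * E^[k - j] (E f)
        = ∑ j ∈ Finset.range (k + 1), (k.choose j : R) * d^[j] a * E^[k + 1 - j] f := by
      refine Finset.sum_congr rfl fun j hj => ?_
      have hjk : j ≤ k := Nat.lt_succ_iff.mp (Finset.mem_range.mp hj)
      have : k + 1 - j = (k - j) + 1 := by omega
      rw [this, Function.iterate_succ_apply]
    have h2 : ∑ j ∈ Finset.range (k + 1), (k.choose j : R) * d^[j] (d a) * E^[k - j] f
        = ∑ j ∈ Finset.range (k + 1), (k.choose j : R) * d^[j + 1] a * E^[k - j] f := by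
      refine Finset.sum_congr rfl fun j hj => ?_
      rw [Function.iterate_succ_apply]
    rw [h1, h2]
    have hsplit : ∀ i ∈ Finset.range (k + 1),
        (((k+1).choose (i+1) : R)) * d^[i+1] a * E^[k + 1 - (i+1)] f
        = ((k.choose i : R)) * d^[i+1] a * E^[k - i] f
          + ((k.choose (i+1) : R)) * d^[i+1] a * E^[k - i] f := by
      intro i hi
      have : k + 1 - (i + 1) = k - i := by omega
      rw [this, Nat.choose_succ_succ', Nat.cast_add, add_mul, add_mul]
    have hT : ∑ j ∈ Finset.range (k + 2), (((k+1).choose j : R)) * d^[j] a * E^[k + 1 - j] f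
        = (∑ i ∈ Finset.range (k + 1), ((k.choose i : R)) * d^[i+1] a * E^[k - i] f
            + ∑ i ∈ Finset.range (k + 1), ((k.choose (i+1) : R)) * d^[i+1] a * E^[k - i] f)
          + a * E^[k + 1] f := by
      rw [Finset.sum_range_succ' (fun j => (((k+1).choose j : R)) * d^[j] a * E^[k + 1 - j] f)
        (k+1)]
      have hc : ∑ i ∈ Finset.range (k + 1),
            (((k+1).choose (i+1) : R)) * d^[i+1] a * E^[k + 1 - (i+1)] f
          = ∑ i ∈ Finset.range (k + 1), (((k.choose i : R)) * d^[i+1] a * E^[k - i] f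
            + ((k.choose (i+1) : R)) * d^[i+1] a * E^[k - i] f) :=
        Finset.sum_congr rfl hsplit
      rw [hc, Finset.sum_add_distrib]
      simp
    have h4 : ∑ i ∈ Finset.range (k + 1), ((k.choose (i+1) : R)) * d^[i+1] a * E^[k - i] f
        = ∑ i ∈ Finset.range k, ((k.choose (i+1) : R)) * d^[i+1] a * E^[k - i] f := by
      rw [Finset.sum_range_succ]
      simp [Nat.choose_succ_self]
    have h3 : ∑ j ∈ Finset.range (k + 1), (k.choose j : R) * d^[j] a * E^[k + 1 - j] f
        = ∑ i ∈ Finset.range k, ((k.choose (i+1) : R)) * d^[i+1] a * E^[k - i] f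
          + a * E^[k + 1] f := by
      rw [Finset.sum_range_succ' (fun j => (k.choose j : R) * d^[j] a * E^[k + 1 - j] f) k]
      congr 1
      · refine Finset.sum_congr rfl fun i hi => ?_
        have : k + 1 - (i + 1) = k - i := by omega
        rw [this]
      · simp
    rw [h3, hT, h4]
    ring
end Leibniz

noncomputable def wseq (b : RatFunc F) : ℕ → RatFunc F
  | 0 => 1
  | m + 1 => rderiv (wseq b m) + b * wseq b m

theorem wseq_eq_iter (b : RatFunc F) (m : ℕ) :
    wseq b m = (fun g => rderiv g + b * g)^[m] 1 := by
  induction m with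
  | zero => rfl
  | succ k ih => rw [Function.iterate_succ_apply', ← ih]; rfl

theorem wseq_leibniz (b : RatFunc F) (q : ℕ) :
    wseq b (q + 1)
      = ∑ j ∈ Finset.range (q + 1), (q.choose j : RatFunc F) * rderiv^[j] b * wseq b (q - j) := by
  rw [wseq_eq_iter, Function.iterate_succ_apply]
  simp only [rderiv_one, zero_add]
  rw [iter_leibniz rderiv b rderiv_add rderiv_mul _ (fun g => rfl) q b 1]
  refine Finset.sum_congr rfl fun j hj => ?_
  rw [wseq_eq_iter]

noncomputable def Dco : Polynomial (RatFunc F) → Polynomial (RatFunc F) :=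
  fun q => q.sum fun i a => monomial i (rderiv a)

theorem coeff_Dco (q : Polynomial (RatFunc F)) (n : ℕ) :
    (Dco q).coeff n = rderiv (q.coeff n) := by
  rw [Dco, Polynomial.sum_def, finset_sum_coeff]
  simp only [coeff_monomial]
  rw [Finset.sum_ite_eq' q.support n (fun i => rderiv (q.coeff i))]
  split
  · rfl
  · rw [Polynomial.notMem_support_iff.mp (by assumption), rderiv_zero]

theorem Dco_add (q r : Polynomial (RatFunc F)) : Dco (q + r) = Dco q + Dco r := by
  ext n
  simp [coeff_Dco, rderiv_add]

theorem Dco_zero : Dco (0 : Polynomial (RatFunc F)) = 0 := by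
  ext n; simp [coeff_Dco, rderiv_zero]

theorem Dco_mul (q r : Polynomial (RatFunc F)) : Dco (q * r) = Dco q * r + q * Dco r := by
  ext n
  simp only [coeff_Dco, coeff_add, coeff_mul]
  rw [rderiv_sum, ← Finset.sum_add_distrib]
  refine Finset.sum_congr rfl fun ij hij => ?_
  rw [rderiv_mul]

theorem Dco_C (a : RatFunc F) : Dco (C a) = C (rderiv a) := by
  ext n
  rw [coeff_Dco, coeff_C, coeff_C]
  split
  · rfl
  · rw [rderiv_zero]

theorem iterate_Dco_C (l : ℕ) (a : RatFunc F) :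
    Dco^[l] (C a) = C (rderiv^[l] a) := by
  induction l generalizing a with
  | zero => rfl
  | succ m ih => rw [Function.iterate_succ_apply, Dco_C, ih,
      Function.iterate_succ_apply]

theorem Dco_sum {ι : Type*} (s : Finset ι) (f : ι → Polynomial (RatFunc F)) :
    Dco (∑ i ∈ s, f i) = ∑ i ∈ s, Dco (f i) := by
  classical
  induction s using Finset.induction_on with
  | empty => simpa using Dco_zero
  | insert _ _ h ih => rw [Finset.sum_insert h, Finset.sum_insert h, Dco_add, ih]

noncomputable def vseq (c : RatFunc F) : ℕ → Polynomial (RatFunc F)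
  | 0 => 1
  | m + 1 => Dco (vseq c m) + (C c * X) * vseq c m

theorem vseq_zero (c : RatFunc F) : vseq c 0 = 1 := rfl

theorem vseq_succ (c : RatFunc F) (m : ℕ) :
    vseq c (m + 1) = Dco (vseq c m) + (C c * X) * vseq c m := rfl

theorem iterE_vseq (c : RatFunc F) (i m : ℕ) :
    (fun q => Dco q + (C c * X) * q)^[i] (vseq c m) = vseq c (m + i) := by
  induction i with
  | zero => rfl
  | succ k ih =>
    rw [Function.iterate_succ_apply', ih]
    show Dco (vseq c (m + k)) + (C c * X) * vseq c (m + k) = vseq c (m + (k + 1))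
    rw [show m + (k + 1) = (m + k) + 1 by omega, vseq_succ]

theorem vseq_coeff_gt (c : RatFunc F) (m : ℕ) : ∀ n, m < n → (vseq c m).coeff n = 0 := by
  induction m with
  | zero =>
    intro n hn
    rw [vseq_zero, coeff_one, if_neg (by omega)]
  | succ m ih =>
    intro n hn
    obtain ⟨n', rfl⟩ := Nat.exists_eq_succ_of_ne_zero (by omega : n ≠ 0)
    rw [vseq_succ, coeff_add, coeff_Dco, ih _ (by omega), rderiv_zero, mul_assoc, coeff_C_mul,
      coeff_X_mul, ih _ (by omega), mul_zero, add_zero]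

theorem vseq_coeff_self (c : RatFunc F) (m : ℕ) : (vseq c m).coeff m = c ^ m := by
  induction m with
  | zero => simp [vseq_zero]
  | succ m ih =>
    rw [vseq_succ, coeff_add, coeff_Dco, vseq_coeff_gt c m _ (by omega), rderiv_zero, mul_assoc,
      coeff_C_mul, coeff_X_mul, ih, zero_add, pow_succ]
    ring

theorem vseq_coeff_zero (c : RatFunc F) (m : ℕ) (hm : 1 ≤ m) : (vseq c m).coeff 0 = 0 := by
  obtain ⟨k, rfl⟩ := Nat.exists_eq_add_of_le hm
  induction k with
  | zero =>
    rw [show (1 : ℕ) + 0 = 0 + 1 by omega, vseq_succ, coeff_add, coeff_Dco, vseq_zero]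
    rw [coeff_one, if_pos rfl, rderiv_one, mul_assoc, mul_coeff_zero]
    simp
  | succ k ih =>
    rw [show (1 : ℕ) + (k + 1) = (1 + k) + 1 by omega, vseq_succ, coeff_add, coeff_Dco, ih,
      rderiv_zero, mul_assoc, mul_coeff_zero]
    · simp
    · omega

theorem derivative_Dco (q : Polynomial (RatFunc F)) :
    derivative (Dco q) = Dco (derivative q) := by
  ext n
  have hc : rderiv ((n : RatFunc F) + 1) = 0 := by
    rw [show ((n : RatFunc F) + 1) = ((n + 1 : ℕ) : RatFunc F) by push_cast; ring,
      rderiv_natCast]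
  rw [coeff_derivative, coeff_Dco, coeff_Dco, coeff_derivative, rderiv_mul, hc,
    mul_zero, add_zero]

theorem derivative_vseq (c : RatFunc F) (m : ℕ) :
    derivative (vseq c m)
      = ∑ k ∈ Finset.range m,
          (fun q => Dco q + (C c * X) * q)^[k] (C c * vseq c (m - 1 - k)) := by
  induction m with
  | zero => simp [vseq_zero]
  | succ m ih =>
    rw [vseq_succ, derivative_add, derivative_Dco, derivative_mul, ih]
    have hCcX : derivative (C c * X) = C c := by
      rw [derivative_mul, derivative_C, derivative_X]
      ring
    rw [hCcX, Dco_sum, Finset.mul_sum]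
    rw [Finset.sum_range_succ' (fun k =>
      (fun q => Dco q + (C c * X) * q)^[k] (C c * vseq c (m + 1 - 1 - k))) m]
    have h1 : ∀ k ∈ Finset.range m,
        (fun q => Dco q + (C c * X) * q)^[k + 1] (C c * vseq c (m + 1 - 1 - (k + 1)))
        = Dco ((fun q => Dco q + (C c * X) * q)^[k] (C c * vseq c (m - 1 - k)))
          + C c * X * (fun q => Dco q + (C c * X) * q)^[k] (C c * vseq c (m - 1 - k)) := by
      intro k hk
      rw [Function.iterate_succ_apply']
      have : m + 1 - 1 - (k + 1) = m - 1 - k := by omega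
      rw [this]
    rw [Finset.sum_congr rfl h1, Finset.sum_add_distrib]
    simp only [Function.iterate_zero_apply, Nat.sub_zero, Nat.add_sub_cancel]
    ring

theorem natCast_poly_eq_zero (p : ℕ) (hchar : ((p : RatFunc F)) = 0) (n : ℕ) (hn : p ∣ n) :
    ((n : Polynomial (RatFunc F))) = 0 := by
  obtain ⟨t, rfl⟩ := hn
  push_cast
  rw [← Polynomial.C_eq_natCast, hchar, map_zero, zero_mul]

theorem derivative_vseq_p (c : RatFunc F) (p : ℕ) (hp : p.Prime)
    (hchar : ((p : RatFunc F)) = 0) :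
    derivative (vseq c p) = C (rderiv^[p - 1] c) := by
  have hp2 : 2 ≤ p := hp.two_le
  rw [derivative_vseq]
  have hterm : ∀ k ∈ Finset.range p,
      (fun q => Dco q + (C c * X) * q)^[k] (C c * vseq c (p - 1 - k))
      = ∑ i ∈ Finset.range (k + 1),
          ((k.choose i : Polynomial (RatFunc F))) * (C (rderiv^[i] c) * vseq c (p - 1 - i)) := by
    intro k hk
    rw [iter_leibniz Dco (C c * X) Dco_add Dco_mul _ (fun g => rfl) k (C c) (vseq c (p - 1 - k))]
    refine Finset.sum_congr rfl fun i hi => ?_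
    rw [iterate_Dco_C, iterE_vseq, mul_assoc]
    have : p - 1 - k + (k - i) = p - 1 - i := by
      have := Finset.mem_range.mp hk
      have := Finset.mem_range.mp hi
      omega
    rw [this]
  rw [Finset.sum_congr rfl hterm]
  have hswap : ∑ k ∈ Finset.range p, ∑ i ∈ Finset.range (k + 1),
        ((k.choose i : Polynomial (RatFunc F))) * (C (rderiv^[i] c) * vseq c (p - 1 - i))
      = ∑ i ∈ Finset.range p, ∑ k ∈ Finset.Ico i p,
          ((k.choose i : Polynomial (RatFunc F))) * (C (rderiv^[i] c) * vseq c (p - 1 - i)) := by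
    simp only [Finset.range_eq_Ico]
    exact (Finset.sum_Ico_Ico_comm 0 p (fun i j =>
      ((j.choose i : Polynomial (RatFunc F))) * (C (rderiv^[i] c) * vseq c (p - 1 - i)))).symm
  rw [hswap]
  have hcol : ∀ i ∈ Finset.range p,
      ∑ k ∈ Finset.Ico i p,
          ((k.choose i : Polynomial (RatFunc F))) * (C (rderiv^[i] c) * vseq c (p - 1 - i))
      = ((p.choose (i + 1) : Polynomial (RatFunc F))) * (C (rderiv^[i] c) * vseq c (p - 1 - i)) := by
    intro i hi
    rw [← Finset.sum_mul]
    congr 1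
    rw [← Nat.cast_sum]
    congr 1
    have : Finset.Ico i p = Finset.Icc i (p - 1) := by
      rw [← Finset.Ico_add_one_right_eq_Icc]
      congr 1
      omega
    rw [this, Nat.sum_Icc_choose]
    congr 1
    omega
  rw [Finset.sum_congr rfl hcol]
  rw [Finset.sum_eq_single (p - 1)]
  · rw [show p - 1 + 1 = p by omega, Nat.choose_self, Nat.cast_one, one_mul,
      show p - 1 - (p - 1) = 0 by omega, vseq_zero, mul_one]
  · intro i hi hne
    have hip : i < p := Finset.mem_range.mp hi
    have hdvd : p ∣ p.choose (i + 1) := hp.dvd_choose_self (by omega) (by omega)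
    rw [natCast_poly_eq_zero p hchar _ hdvd, zero_mul]
  · intro h
    exact absurd (Finset.mem_range.mpr (by omega : p - 1 < p)) h

theorem eval_one_Dco (q : Polynomial (RatFunc F)) :
    (Dco q).eval 1 = rderiv (q.eval 1) := by
  rw [Dco, Polynomial.sum_def, Polynomial.eval_finset_sum]
  simp only [eval_monomial, one_pow, mul_one]
  rw [← rderiv_sum]
  congr 1
  rw [eval_eq_sum, Polynomial.sum_def]
  simp

theorem eval_one_vseq (c : RatFunc F) (m : ℕ) : (vseq c m).eval 1 = wseq c m := by
  induction m with
  | zero => simp [vseq_zero, wseq]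
  | succ m ih =>
    rw [vseq_succ, eval_add, eval_mul, eval_mul, eval_C, eval_X, eval_one_Dco, ih]
    show _ = rderiv (wseq c m) + c * wseq c m
    ring

theorem wseq_p (p : ℕ) (hp : p.Prime) (hchar : ((p : RatFunc F)) = 0)
    (hK : ∀ n : ℕ, 0 < n → n < p → ((n : RatFunc F)) ≠ 0) (c : RatFunc F) :
    wseq c p = rderiv^[p - 1] c + c ^ p := by
  have hp2 : 2 ≤ p := hp.two_le
  have hder := derivative_vseq_p c p hp hchar
  have hc0 : (vseq c p).coeff 0 = 0 := vseq_coeff_zero c p (by omega)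
  have hcp : (vseq c p).coeff p = c ^ p := vseq_coeff_self c p
  have hhigh : ∀ n, p < n → (vseq c p).coeff n = 0 := vseq_coeff_gt c p
  have hc1 : (vseq c p).coeff 1 = rderiv^[p - 1] c := by
    have h : (derivative (vseq c p)).coeff 0 = rderiv^[p - 1] c := by
      rw [hder, coeff_C]
      simp
    rw [coeff_derivative] at h
    simpa using h
  have hmid : ∀ n, 2 ≤ n → n ≤ p - 1 → (vseq c p).coeff n = 0 := by
    intro n h2 h3
    have h : (derivative (vseq c p)).coeff (n - 1) = 0 := by
      rw [hder, coeff_C, if_neg (by omega)]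
    rw [coeff_derivative] at h
    have hn : n - 1 + 1 = n := by omega
    rw [hn] at h
    have hne : (((n - 1 : ℕ) : RatFunc F) + 1) ≠ 0 := by
      have hcast := congrArg (fun t : ℕ => ((t : RatFunc F))) hn
      push_cast at hcast
      rw [hcast]
      exact hK n (by omega) (by omega)
    exact (mul_eq_zero.mp h).resolve_right hne
  have hdeg : (vseq c p).natDegree < p + 1 := by
    have : (vseq c p).natDegree ≤ p := natDegree_le_iff_coeff_eq_zero.mpr hhigh
    omega
  rw [← eval_one_vseq, eval_eq_sum_range' hdeg]
  simp only [one_pow, mul_one]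
  rw [Finset.sum_range_succ, hcp]
  congr 1
  rw [Finset.sum_eq_single 1]
  · exact hc1
  · intro i hi hne
    have hip : i < p := Finset.mem_range.mp hi
    rcases Nat.eq_zero_or_pos i with h0 | h0
    · subst h0; exact hc0
    · exact hmid i (by omega) (by omega)
  · intro h
    exact absurd (Finset.mem_range.mpr (by omega : 1 < p)) h

theorem inner_zero (B : Polynomial (RatFunc F)) (i : ℕ) :
    (B.sum fun j r => ∑ l ∈ Finset.range (i + 1),
      monomial (i - l + j) ((i.choose l : RatFunc F) * 0 * rderiv^[l] r)) = 0 := by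
  rw [Polynomial.sum_def]
  simp

theorem omul_zero_left (B : Polynomial (RatFunc F)) : omul 0 B = 0 :=
  Polynomial.sum_zero_index _

theorem omul_add_left (A A' B : Polynomial (RatFunc F)) :
    omul (A + A') B = omul A B + omul A' B := by
  refine Polynomial.sum_add_index A A' _ (fun i => inner_zero B i) fun i a a' => ?_
  rw [← Polynomial.sum_add]
  congr 1
  funext j r
  rw [← Finset.sum_add_distrib]
  refine Finset.sum_congr rfl fun l hl => ?_
  rw [← map_add (monomial (i - l + j))]
  congr 1
  ring

theorem omul_sum_left {ι : Type*} (s : Finset ι) (f : ι → Polynomial (RatFunc F))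
    (B : Polynomial (RatFunc F)) :
    omul (∑ i ∈ s, f i) B = ∑ i ∈ s, omul (f i) B := by
  classical
  induction s using Finset.induction_on with
  | empty => simpa using omul_zero_left B
  | insert _ _ h ih => rw [Finset.sum_insert h, Finset.sum_insert h, omul_add_left, ih]

theorem omul_def (A B : Polynomial (RatFunc F)) :
    omul A B = A.sum fun i a => B.sum fun j r =>
      ∑ l ∈ Finset.range (i + 1),
        monomial (i - l + j) ((i.choose l : RatFunc F) * a * rderiv^[l] r) := rfl

theorem omul_add_right (A B B' : Polynomial (RatFunc F)) :
    omul A (B + B') = omul A B + omul A B' := by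
  simp only [omul_def]
  rw [← Polynomial.sum_add]
  congr 1
  funext i a
  refine Polynomial.sum_add_index B B' _ (fun j => ?_) fun j r r' => ?_
  · simp [iterate_rderiv_zero]
  · rw [← Finset.sum_add_distrib]
    refine Finset.sum_congr rfl fun l hl => ?_
    rw [← map_add (monomial (i - l + j))]
    congr 1
    rw [iterE_add rderiv rderiv_add l r r']
    ring

theorem omul_monomial (i : ℕ) (a : RatFunc F) (B : Polynomial (RatFunc F)) :
    omul (monomial i a) B = B.sum fun j r => ∑ l ∈ Finset.range (i + 1),
      monomial (i - l + j) ((i.choose l : RatFunc F) * a * rderiv^[l] r) :=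
  Polynomial.sum_monomial_index a _ (inner_zero B i)

theorem omul_monomial_X (k : ℕ) (a : RatFunc F) :
    omul (monomial k a) X = monomial (k + 1) a := by
  rw [omul_monomial, ← monomial_one_one_eq_X,
    Polynomial.sum_monomial_index _ _ (by simp [iterate_rderiv_zero])]
  rw [Finset.sum_eq_single_of_mem 0 (Finset.mem_range.mpr (by omega))]
  · simp
  · intro l hl hne
    rw [iterate_rderiv_one l hne, mul_zero, monomial_zero_right]

theorem omul_monomial_C (k : ℕ) (a r : RatFunc F) :
    omul (monomial k a) (C r) = ∑ l ∈ Finset.range (k + 1),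
      monomial (k - l) ((k.choose l : RatFunc F) * a * rderiv^[l] r) := by
  rw [omul_monomial, ← monomial_zero_left,
    Polynomial.sum_monomial_index _ _ (by simp [iterate_rderiv_zero])]
  simp only [add_zero]

theorem S2_eq (b : RatFunc F) (n : ℕ) :
    ∑ k ∈ Finset.range (n + 1), ∑ l ∈ Finset.range (k + 1),
        monomial (k - l) ((k.choose l : RatFunc F)
          * ((n.choose k : RatFunc F) * wseq b (n - k)) * rderiv^[l] b)
      = ∑ m ∈ Finset.range (n + 1),
          monomial m ((n.choose m : RatFunc F) * wseq b (n - m + 1)) := by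
  have hreflect : ∀ k ∈ Finset.range (n + 1),
      ∑ l ∈ Finset.range (k + 1), monomial (k - l) ((k.choose l : RatFunc F)
          * ((n.choose k : RatFunc F) * wseq b (n - k)) * rderiv^[l] b)
      = ∑ m ∈ Finset.range (k + 1), monomial m ((k.choose (k - m) : RatFunc F)
          * ((n.choose k : RatFunc F) * wseq b (n - k)) * rderiv^[k - m] b) := by
    intro k hk
    rw [← Finset.sum_range_reflect]
    simp only [Nat.add_sub_cancel]
    refine Finset.sum_congr rfl fun m hm => ?_
    have hmk : m ≤ k := by
      have := Finset.mem_range.mp hm; omega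
    congr 2
    omega
  rw [Finset.sum_congr rfl hreflect]
  have hswap : ∑ k ∈ Finset.range (n + 1), ∑ m ∈ Finset.range (k + 1),
        monomial m ((k.choose (k - m) : RatFunc F)
          * ((n.choose k : RatFunc F) * wseq b (n - k)) * rderiv^[k - m] b)
      = ∑ m ∈ Finset.range (n + 1), ∑ k ∈ Finset.Ico m (n + 1),
          monomial m ((k.choose (k - m) : RatFunc F)
            * ((n.choose k : RatFunc F) * wseq b (n - k)) * rderiv^[k - m] b) := by
    simp only [Finset.range_eq_Ico]
    exact (Finset.sum_Ico_Ico_comm 0 (n + 1) (fun m k =>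
      monomial m ((k.choose (k - m) : RatFunc F)
        * ((n.choose k : RatFunc F) * wseq b (n - k)) * rderiv^[k - m] b))).symm
  rw [hswap]
  refine Finset.sum_congr rfl fun m hm => ?_
  have hmn : m ≤ n := by have := Finset.mem_range.mp hm; omega
  rw [Finset.sum_Ico_eq_sum_range]
  have hrange : n + 1 - m = (n - m) + 1 := by omega
  rw [hrange]
  have hterm : ∀ j ∈ Finset.range ((n - m) + 1),
      monomial m (((m + j).choose (m + j - m) : RatFunc F)
        * ((n.choose (m + j) : RatFunc F) * wseq b (n - (m + j))) * rderiv^[m + j - m] b)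
      = monomial m ((n.choose m : RatFunc F)
          * (((n - m).choose j : RatFunc F) * rderiv^[j] b * wseq b ((n - m) - j))) := by
    intro j hj
    have hjnm : j ≤ n - m := by have := Finset.mem_range.mp hj; omega
    have hmjm : m + j - m = j := by omega
    have hnk : n - (m + j) = (n - m) - j := by omega
    rw [hmjm, hnk]
    have hch : (m + j).choose j * n.choose (m + j) = n.choose m * (n - m).choose j := by
      have h1 : (m + j).choose j = (m + j).choose m := (Nat.choose_symm_add).symm
      rw [h1, mul_comm, Nat.choose_mul (n := n) (k := m + j) (s := m) (by omega), Nat.add_sub_cancel_left]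
    congr 1
    have := congrArg (fun t : ℕ => ((t : RatFunc F))) hch
    push_cast at this
    linear_combination (wseq b ((n - m) - j) * rderiv^[j] b) * this
  rw [Finset.sum_congr rfl hterm, ← map_sum (monomial m), ← Finset.mul_sum,
    ← wseq_leibniz b (n - m)]

theorem opow_closed (b : RatFunc F) (n : ℕ) :
    opow (X + Polynomial.C b) n
      = ∑ k ∈ Finset.range (n + 1),
          monomial k ((n.choose k : RatFunc F) * wseq b (n - k)) := by
  induction n with
  | zero =>
    show (1 : Polynomial (RatFunc F)) = _
    rw [Finset.sum_range_one]
    simp [wseq]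
  | succ n ih =>
    show omul (opow (X + Polynomial.C b) n) (X + Polynomial.C b) = _
    rw [ih, omul_sum_left]
    have hsplit : ∀ k ∈ Finset.range (n + 1),
        omul (monomial k ((n.choose k : RatFunc F) * wseq b (n - k))) (X + Polynomial.C b)
        = monomial (k + 1) ((n.choose k : RatFunc F) * wseq b (n - k))
          + ∑ l ∈ Finset.range (k + 1), monomial (k - l) ((k.choose l : RatFunc F)
              * ((n.choose k : RatFunc F) * wseq b (n - k)) * rderiv^[l] b) := by
      intro k hk
      rw [omul_add_right, omul_monomial_X, omul_monomial_C]
    rw [Finset.sum_congr rfl hsplit, Finset.sum_add_distrib, S2_eq]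
    -- now: S1 + S2' = target
    rw [Finset.sum_range_succ' (fun m => monomial m
      (((n + 1).choose m : RatFunc F) * wseq b (n + 1 - m))) (n + 1)]
    have htgt : ∀ i ∈ Finset.range (n + 1),
        monomial (i + 1) (((n + 1).choose (i + 1) : RatFunc F) * wseq b (n + 1 - (i + 1)))
        = monomial (i + 1) ((n.choose i : RatFunc F) * wseq b (n - i))
          + monomial (i + 1) ((n.choose (i + 1) : RatFunc F) * wseq b (n - i)) := by
      intro i hi
      have h1 : n + 1 - (i + 1) = n - i := by omega
      rw [h1, Nat.choose_succ_succ', Nat.cast_add, add_mul, map_add (monomial (i + 1))]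
    rw [Finset.sum_congr rfl htgt, Finset.sum_add_distrib]
    have hS2 : ∑ m ∈ Finset.range (n + 1),
        monomial m ((n.choose m : RatFunc F) * wseq b (n - m + 1))
        = ∑ i ∈ Finset.range (n + 1),
            monomial (i + 1) ((n.choose (i + 1) : RatFunc F) * wseq b (n - i))
          + monomial 0 (((n + 1).choose 0 : RatFunc F) * wseq b (n + 1 - 0)) := by
    -- peel m = 0 from LHS; extend inner sum on RHS
      rw [Finset.sum_range_succ' (fun m => monomial m
        ((n.choose m : RatFunc F) * wseq b (n - m + 1))) n]
      rw [Finset.sum_range_succ (fun i => monomial (i + 1)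
        ((n.choose (i + 1) : RatFunc F) * wseq b (n - i)))]
      rw [Nat.choose_succ_self, Nat.cast_zero, zero_mul, monomial_zero_right, add_zero]
      congr 1
      · refine Finset.sum_congr rfl fun i hi => ?_
        have hin : i < n := Finset.mem_range.mp hi
        rw [show n - (i + 1) + 1 = n - i by omega]
      · simp
    rw [hS2]
    abel

theorem wseq_zero' (b : RatFunc F) : wseq b 0 = 1 := rfl

end Jac

/-- For a prime `p` and `b(x) ∈ 𝔽_p(x)`, in the Ore ring `𝔽_p(x)⟨∂⟩` one has
`(∂ + b(x))^p = ∂^p + b_p(x)` with `b_p = b^{(p−1)} + b^p`; moreover `b_p` lies in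
`𝔽_p(xᵖ)`, i.e. its derivative vanishes. -/
theorem pow_p_of_order_one_operator (p : ℕ) [Fact p.Prime] (b : RatFunc (ZMod p)) :
    opow (Polynomial.X + Polynomial.C b) p =
        Polynomial.X ^ p + Polynomial.C (rderiv^[p - 1] b + b ^ p) ∧
      rderiv (rderiv^[p - 1] b + b ^ p) = 0 := by
  have hp : p.Prime := Fact.out
  have hp2 : 2 ≤ p := hp.two_le
  have hcharF : ((p : ZMod p)) = 0 := ZMod.natCast_self p
  have hchar : ((p : RatFunc (ZMod p))) = 0 := by
    rw [show ((p : RatFunc (ZMod p)))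
        = algebraMap (Polynomial (ZMod p)) _ ((p : Polynomial (ZMod p)))
      from (map_natCast _ p).symm, ← Polynomial.C_eq_natCast, hcharF, map_zero, map_zero]
  have hK : ∀ n : ℕ, 0 < n → n < p → ((n : RatFunc (ZMod p))) ≠ 0 := by
    intro n h0 hnp hzero
    have h1 : ((n : Polynomial (ZMod p))) = 0 := by
      apply RatFunc.algebraMap_injective (ZMod p)
      rw [map_natCast, map_zero, hzero]
    rw [← Polynomial.C_eq_natCast] at h1
    have h2 : ((n : ZMod p)) = 0 := by
      rw [show (0 : Polynomial (ZMod p)) = Polynomial.C 0 by simp] at h1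
      exact Polynomial.C_inj.mp h1
    have := (ZMod.natCast_eq_zero_iff n p).mp h2
    have := Nat.le_of_dvd h0 this
    omega
  have hw : Jac.wseq b p = rderiv^[p - 1] b + b ^ p := Jac.wseq_p p hp hchar hK b
  constructor
  · rw [Jac.opow_closed b p, Finset.sum_range_succ]
    have hlast : Polynomial.monomial p ((p.choose p : RatFunc (ZMod p)) * Jac.wseq b (p - p))
        = Polynomial.X ^ p := by
      rw [Nat.choose_self, Nat.cast_one, one_mul, Nat.sub_self, Jac.wseq_zero',
        Polynomial.monomial_one_right_eq_X_pow]
    have hrest : ∑ k ∈ Finset.range p,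
        Polynomial.monomial k ((p.choose k : RatFunc (ZMod p)) * Jac.wseq b (p - k))
        = Polynomial.C (rderiv^[p - 1] b + b ^ p) := by
      rw [Finset.sum_eq_single_of_mem 0 (Finset.mem_range.mpr (by omega))]
      · rw [Nat.choose_zero_right, Nat.cast_one, one_mul, Nat.sub_zero, hw,
          Polynomial.monomial_zero_left]
      · intro k hk hne
        have hkp : k < p := Finset.mem_range.mp hk
        obtain ⟨t, ht⟩ := hp.dvd_choose_self hne hkp
        rw [ht, Nat.cast_mul, hchar, zero_mul, zero_mul, Polynomial.monomial_zero_right]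
    rw [hlast, hrest, add_comm]
  · rw [Jac.rderiv_add, Jac.rderiv_pow]
    have h1 : rderiv (rderiv^[p - 1] b) = rderiv^[p] b := by
      rw [← Function.iterate_succ_apply' rderiv (p - 1) b]
      congr 1
      omega
    rw [h1, Jac.iterate_rderiv_charP p (by omega) hcharF b, hchar]
    ring
end
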